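/- arXiv:1111.5634 — 6 statements merged into one kernel-verified Lean document; each statement's English description precedes it below -/
import Mathlib

section
/- There is a bijection between nonnegative integer sequences (b_1, ..., b_n) with b_1 ≤ r+1 and b_i ≤ r+1+b_{i-1} for 2 ≤ i ≤ n, and (r+2)-ary rooted plane trees with n+1 internal nodes. In particular, the number of such sequences equals (1/((r+1)(n+1)+1)) * binomial((r+2)(n+1), n+1). -/
/-- Rooted ordered `(r+2)`-ary trees: each internal node has exactly `r+2` ordered
children, each leaf has none. -/
inductive AryTree (r : ℕ) : Type
  | leaf : AryTree r
  | node : (Fin (r + 2) → AryTree r) → AryTree r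

/-- The number of internal nodes of an `(r+2)`-ary tree. -/
def AryTree.internals {r : ℕ} : AryTree r → ℕ
  | .leaf => 0
  | .node c => 1 + ∑ i : Fin (r + 2), (c i).internals

namespace FC

/-- weight of a letter: `true` ↦ r+1, `false` ↦ -1 -/
def wt (r : ℕ) (b : Bool) : ℤ := if b then (r : ℤ) + 1 else -1

/-- weight sum of a word -/
def ws (r : ℕ) (w : List Bool) : ℤ := (w.map (wt r)).sum

variable {r : ℕ}

@[simp] lemma ws_nil : ws r [] = 0 := rfl

@[simp] lemma ws_append (u v : List Bool) : ws r (u ++ v) = ws r u + ws r v := by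
  simp [ws]

@[simp] lemma ws_cons (b : Bool) (w : List Bool) : ws r (b :: w) = wt r b + ws r w := by
  simp [ws]

lemma ws_eq_counts (w : List Bool) :
    ws r w = ((r : ℤ) + 2) * (w.count true) - w.length := by
  induction w with
  | nil => simp
  | cons b w ih =>
    cases b <;> simp [ws_cons, ih, wt, List.count_cons] <;> push_cast <;> ring

/-- A valid word (Łukasiewicz word): total weight -1, proper prefixes nonneg. -/
def Valid (r : ℕ) (w : List Bool) : Prop :=
  w ≠ [] ∧ ws r w = -1 ∧ ∀ p, p <+: w → p ≠ w → 0 ≤ ws r p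

lemma valid_take_iff {w : List Bool} (hne : w ≠ []) (hw : ws r w = -1) :
    Valid r w ↔ ∀ t, t < w.length → 0 ≤ ws r (w.take t) := by
  constructor
  · rintro ⟨-, -, h⟩ t ht
    refine h _ (List.take_prefix _ _) ?_
    intro he
    have := congrArg List.length he
    simp [List.length_take] at this
    omega
  · intro h
    refine ⟨hne, hw, fun p hp hpe => ?_⟩
    have hl : p.length < w.length := by
      rcases lt_or_eq_of_le hp.length_le with h' | h'
      · exact h'
      · exact absurd (List.prefix_iff_eq_take.1 hp ▸ (h' ▸ List.take_length (l := w)) : p = w) hpe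
    have : p = w.take p.length := List.prefix_iff_eq_take.1 hp
    rw [this]; exact h _ hl


section Cycle
variable {w : List Bool} (hw : ws r w = -1)

/-- partial sums of the doubled word -/
noncomputable def S (r : ℕ) (w : List Bool) (j : ℕ) : ℤ := ws r ((w ++ w).take j)

@[simp] lemma S_zero : S r w 0 = 0 := by simp [S]

lemma S_wrap (j : ℕ) (hj : j ≤ w.length) : S r w (w.length + j) = S r w j + ws r w := by
  have h1 : (w ++ w).take (w.length + j) = w ++ w.take j := List.take_length_add_append j
  have h2 : (w ++ w).take j = w.take j := List.take_append_of_le_length hj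
  rw [S, S, h1, h2, ws_append]; ring

lemma ws_take_rotate (k j : ℕ) (hk : k ≤ w.length) (hj : j ≤ w.length) :
    ws r ((w.rotate k).take j) = S r w (k + j) - S r w k := by
  have hrot : w.rotate k = List.drop k w ++ List.take k w :=
    List.rotate_eq_drop_append_take hk
  have hdd : (w ++ w).drop k = w.drop k ++ w := by
    rw [List.drop_append, Nat.sub_eq_zero_of_le hk, List.drop_zero]
  have hrl : (w.rotate k).length = w.length := by simp
  -- (rotate k).take j = ((w++w).drop k).take j
  have key : (w.rotate k).take j = ((w ++ w).drop k).take j := by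
    have hsplit : (w ++ w).drop k = w.rotate k ++ w.drop k := by
      rw [hdd, hrot, List.append_assoc, List.take_append_drop]
    rw [hsplit, List.take_append_of_le_length (by rw [List.length_rotate]; exact hj)]
  have h2 : (w ++ w).take (k + j) = (w ++ w).take k ++ ((w ++ w).drop k).take j :=
    List.take_add
  have := congrArg (ws r) h2
  rw [ws_append] at this
  rw [key, S, S, this]; ring

include hw in
lemma S_wrap' (j : ℕ) (hj : j ≤ w.length) : S r w (w.length + j) = S r w j - 1 := by
  rw [S_wrap j hj, hw]; ring

include hw in
lemma valid_rotate_iff {k : ℕ} (hk : k < w.length) :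
    Valid r (w.rotate k) ↔
      ((∀ i, k < i → i < w.length → S r w k ≤ S r w i) ∧ (∀ i, i < k → S r w k < S r w i)) := by
  have hne : w ≠ [] := by rintro rfl; simp at hk
  have hrl : (w.rotate k).length = w.length := by simp
  have hcnt : ws r (w.rotate k) = -1 := by
    have hp := (List.rotate_perm w k).map (wt r)
    rw [ws, hp.sum_eq]; exact hw
  have hne' : w.rotate k ≠ [] := by
    intro h; rw [← List.length_eq_zero_iff, hrl] at h; omega
  rw [valid_take_iff hne' hcnt, hrl]
  constructor
  · intro h
    constructor
    · intro i hki hiL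
      have := h (i - k) (by omega)
      rw [ws_take_rotate k (i-k) (by omega) (by omega)] at this
      have hik : k + (i - k) = i := by omega
      rw [hik] at this; linarith
    · intro i hik
      have hjL : w.length + i - k < w.length := by omega
      have := h (w.length + i - k) hjL
      rw [ws_take_rotate k (w.length + i - k) (by omega) (by omega)] at this
      have : 0 ≤ S r w (w.length + i) - S r w k := by
        have hh : k + (w.length + i - k) = w.length + i := by omega
        rwa [hh] at this
      rw [S_wrap' hw i (by omega)] at this
      linarith
  · rintro ⟨h1, h2⟩ t ht
    rw [ws_take_rotate k t (by omega) (by omega)]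
    rcases Nat.lt_or_ge (k + t) w.length with hlt | hge
    · rcases Nat.eq_zero_or_pos t with rfl | htpos
      · simp
      · have := h1 (k + t) (by omega) hlt
        linarith
    · have hi : k + t - w.length < k := by omega
      rcases Nat.eq_zero_or_pos t with rfl | htpos
      · simp
      · have h2' := h2 (k + t - w.length) hi
        have h3 : S r w (k + t) = S r w (k + t - w.length) - 1 := by
          have he : k + t = w.length + (k + t - w.length) := by omega
          conv_lhs => rw [he]
          rw [S_wrap' hw _ (by omega)]
        linarith

include hw in
theorem exists_unique_valid_rotate (hne : w ≠ []) :
    ∃! k, k < w.length ∧ Valid r (w.rotate k) := by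
  have hL : 0 < w.length := List.length_pos_iff.2 hne
  -- minimal index attaining the minimum of S on [0, L)
  have hPex : ∃ i, i < w.length ∧ ∀ j, j < w.length → S r w i ≤ S r w j := by
    obtain ⟨i, hi, hmin⟩ := Finset.exists_min_image (Finset.range w.length) (S r w)
      ⟨0, Finset.mem_range.2 hL⟩
    exact ⟨i, Finset.mem_range.1 hi, fun j hj => hmin j (Finset.mem_range.2 hj)⟩
  classical
  set k := Nat.find hPex with hkdef
  obtain ⟨hkL, hkmin⟩ := Nat.find_spec hPex
  have hkleast := fun m (hm : m < k) => Nat.find_min hPex hm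
  refine ⟨k, ⟨hkL, ?_⟩, ?_⟩
  · rw [valid_rotate_iff hw hkL]
    refine ⟨fun i _ hiL => hkmin i hiL, fun i hik => ?_⟩
    rcases lt_or_eq_of_le (hkmin i (by omega)) with h | h
    · exact h
    · exfalso
      exact hkleast i hik ⟨by omega, fun j hj => h ▸ hkmin j hj⟩
  · rintro k' ⟨hk'L, hk'v⟩
    rw [valid_rotate_iff hw hk'L] at hk'v
    obtain ⟨hA, hB⟩ := hk'v
    -- k' satisfies P
    have hP' : k' < w.length ∧ ∀ j, j < w.length → S r w k' ≤ S r w j := by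
      refine ⟨hk'L, fun j hj => ?_⟩
      rcases lt_trichotomy j k' with h | rfl | h
      · exact le_of_lt (hB j h)
      · exact le_rfl
      · exact hA j h hj
    have h1 : k ≤ k' := Nat.find_le hP'
    rcases lt_or_eq_of_le h1 with h | h
    · have h2 := hB k h
      have h3 := hkmin k' hk'L
      linarith
    · omega

end Cycle

/-- the length of words: (r+2)m+1 -/
def Lm (r m : ℕ) : ℕ := (r + 2) * m + 1

lemma ws_of_count {m : ℕ} {w : List Bool} (hL : w.length = Lm r m) (hc : w.count true = m) :
    ws r w = -1 := by
  rw [ws_eq_counts w, hL, hc, Lm]; push_cast; ring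

lemma count_of_valid {m : ℕ} {w : List Bool} (hL : w.length = Lm r m) (hv : Valid r w) :
    w.count true = m := by
  have h := ws_eq_counts (r := r) w
  rw [hv.2.1, hL, Lm] at h
  have : ((r : ℤ) + 2) * w.count true = ((r : ℤ) + 2) * m := by push_cast at h ⊢; linarith
  have := mul_left_cancel₀ (by positivity : ((r : ℤ) + 2) ≠ 0) this
  exact_mod_cast this

variable (r) in
/-- all words of length (r+2)m+1 with m trues -/
abbrev Am (m : ℕ) : Type := {w : List Bool // w.length = Lm r m ∧ w.count true = m}

variable (r) in
/-- valid words of length (r+2)m+1 with m trues -/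
abbrev Vm (m : ℕ) : Type := {w : List Bool // w.length = Lm r m ∧ w.count true = m ∧ Valid r w}

lemma count_rotate (w : List Bool) (k : ℕ) : (w.rotate k).count true = w.count true :=
  (List.rotate_perm w k).count_eq true

lemma ne_nil_of_len {m : ℕ} {w : List Bool} (hL : w.length = Lm r m) : w ≠ [] := by
  intro h; rw [h] at hL; simp [Lm] at hL

variable (r) in
/-- the canonical rotation index making a word valid -/
noncomputable def kOf (w : List Bool) : ℕ :=
  if h : ws r w = -1 ∧ w ≠ [] then Classical.choose (exists_unique_valid_rotate h.1 h.2) else 0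

lemma kOf_spec {w : List Bool} (hw : ws r w = -1) (hne : w ≠ []) :
    kOf r w < w.length ∧ Valid r (w.rotate (kOf r w)) := by
  rw [kOf, dif_pos ⟨hw, hne⟩]
  exact (Classical.choose_spec (exists_unique_valid_rotate hw hne)).1

lemma kOf_unique {w : List Bool} (hw : ws r w = -1) (hne : w ≠ []) {k : ℕ}
    (hk : k < w.length) (hv : Valid r (w.rotate k)) : k = kOf r w := by
  rw [kOf, dif_pos ⟨hw, hne⟩]
  exact (Classical.choose_spec (exists_unique_valid_rotate hw hne)).2 k ⟨hk, hv⟩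

noncomputable def cycleFun (m : ℕ) (x : Am r m) : Vm r m × Fin (Lm r m) :=
  (⟨x.val.rotate (kOf r x.val),
    by rw [List.length_rotate]; exact x.prop.1,
    by rw [count_rotate]; exact x.prop.2,
    (kOf_spec (ws_of_count x.prop.1 x.prop.2) (ne_nil_of_len x.prop.1)).2⟩,
   ⟨kOf r x.val,
    by have h := (kOf_spec (ws_of_count x.prop.1 x.prop.2) (ne_nil_of_len x.prop.1)).1
       have h2 := x.prop.1
       omega⟩)

lemma rotate_cancel {w : List Bool} {k : ℕ} (hk : k ≤ w.length) :
    (w.rotate k).rotate (w.length - k) = w := by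
  rw [List.rotate_rotate, Nat.add_sub_cancel' hk, List.rotate_length]

lemma cycleFun_bijective (m : ℕ) : Function.Bijective (cycleFun (r := r) m) := by
  constructor
  · rintro ⟨w, hw⟩ ⟨w', hw'⟩ h
    rw [cycleFun, cycleFun, Prod.mk.injEq] at h
    obtain ⟨h1, h2⟩ := h
    have h2' : kOf r w = kOf r w' := congrArg Fin.val h2
    have h1' : w.rotate (kOf r w) = w'.rotate (kOf r w) := by
      have := congrArg Subtype.val h1
      simpa [h2'] using this
    have hkle : kOf r w ≤ w.length :=
      le_of_lt (kOf_spec (ws_of_count hw.1 hw.2) (ne_nil_of_len hw.1)).1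
    have hLL : w'.length = w.length := by rw [hw.1, hw'.1]
    apply Subtype.ext
    calc w = (w.rotate (kOf r w)).rotate (w.length - kOf r w) := (rotate_cancel hkle).symm
    _ = (w'.rotate (kOf r w)).rotate (w'.length - kOf r w) := by rw [h1', hLL]
    _ = w' := rotate_cancel (by omega)
  · rintro ⟨⟨v, hv⟩, ⟨k, hkL⟩⟩
    set w := v.rotate (Lm r m - k) with hwdef
    have hwL : w.length = Lm r m := by rw [hwdef, List.length_rotate]; exact hv.1
    have hwc : w.count true = m := by rw [hwdef, count_rotate]; exact hv.2.1
    have hrot : w.rotate k = v := by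
      rw [hwdef, List.rotate_rotate]
      have h3 : Lm r m - k + k = v.length := by rw [hv.1]; omega
      rw [h3, List.rotate_length]
    have hkeq : k = kOf r w :=
      kOf_unique (ws_of_count hwL hwc) (ne_nil_of_len hwL)
        (by rw [hwL]; exact hkL) (by rw [hrot]; exact hv.2.2)
    refine ⟨⟨w, hwL, hwc⟩, ?_⟩
    rw [cycleFun, Prod.mk.injEq]
    exact ⟨Subtype.ext (by simp only [← hkeq]; exact hrot), Fin.ext (by simpa using hkeq.symm)⟩

noncomputable def cycleEquiv (m : ℕ) : Am r m ≃ Vm r m × Fin (Lm r m) :=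
  Equiv.ofBijective _ (cycleFun_bijective m)

/-- every list of booleans is the map of `getD` over a range -/
lemma eq_map_range (w : List Bool) :
    w = (List.range w.length).map (fun j => w.getD j false) := by
  apply List.ext_getElem
  · simp
  · intro i h1 h2
    simp only [List.getElem_map, List.getElem_range]
    rw [List.getD_eq_getElem _ _ h1]

lemma count_map_range (g : ℕ → Bool) (t : ℕ) :
    ((List.range t).map g).count true
      = ((Finset.range t).filter (fun j => g j = true)).card := by
  induction t with
  | zero => simp
  | succ t ih =>
    rw [List.range_succ, List.map_append, List.count_append, Finset.range_add_one,
      Finset.filter_insert]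
    by_cases h : g t = true
    · rw [if_pos h, Finset.card_insert_of_notMem (by simp)]
      simp [h, ih]
    · rw [if_neg h]
      simp only [List.map_cons, List.map_nil, List.count_cons, List.count_nil]
      simp [h, ih]

/-- words of length L with m trues are in bijection with m-subsets of range L -/
def amEquivPowerset (m : ℕ) :
    Am r m ≃ {s // s ∈ Finset.powersetCard m (Finset.range (Lm r m))} where
  toFun x := ⟨(Finset.range (Lm r m)).filter (fun j => x.val.getD j false = true), by
    obtain ⟨w, hL, hc⟩ := x
    rw [Finset.mem_powersetCard]
    refine ⟨Finset.filter_subset _ _, ?_⟩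
    show ((Finset.range (Lm r m)).filter (fun j => w.getD j false = true)).card = m
    rw [← count_map_range, ← hL, ← eq_map_range]
    exact hc⟩
  invFun s := ⟨(List.range (Lm r m)).map (fun j => decide (j ∈ s.val)), by
    have hsub := (Finset.mem_powersetCard.1 s.prop).1
    have hcard := (Finset.mem_powersetCard.1 s.prop).2
    constructor
    · simp
    · rw [count_map_range]
      have : (Finset.range (Lm r m)).filter (fun j => decide (j ∈ s.val) = true) = s.val := by
        apply Finset.ext
        intro j
        simp only [Finset.mem_filter, decide_eq_true_eq]
        exact ⟨fun h => h.2, fun h => ⟨hsub h, h⟩⟩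
      rw [this, hcard]⟩
  left_inv x := by
    obtain ⟨w, hL, hc⟩ := x
    apply Subtype.ext
    show (List.range (Lm r m)).map
      (fun j => decide (j ∈ (Finset.range (Lm r m)).filter (fun j => w.getD j false = true))) = w
    conv_rhs => rw [eq_map_range w]
    rw [hL]
    apply List.map_congr_left
    intro j hj
    have hjL : j < Lm r m := by simpa using hj
    by_cases h : w.getD j false = true
    · simp [Finset.mem_filter, h, hjL]
    · simp only [Bool.not_eq_true] at h
      simp [Finset.mem_filter, h, hjL]
  right_inv s := by
    apply Subtype.ext
    have hsub := (Finset.mem_powersetCard.1 s.prop).1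
    apply Finset.ext
    intro j
    simp only [Finset.mem_filter, Finset.mem_range]
    constructor
    · rintro ⟨hjL, h⟩
      rw [List.getD_eq_getElem _ _ (by simpa using hjL)] at h
      simpa using h
    · intro h
      have hjL : j < Lm r m := by simpa using hsub h
      refine ⟨hjL, ?_⟩
      rw [List.getD_eq_getElem _ _ (by simpa using hjL)]
      simpa using h

lemma card_Am (m : ℕ) : Nat.card (Am r m) = (Lm r m).choose m := by
  rw [Nat.card_congr (amEquivPowerset m), Nat.card_eq_finsetCard,
    Finset.card_powersetCard, Finset.card_range]

instance finite_Am (m : ℕ) : Finite (Am r m) := Finite.of_equiv _ (amEquivPowerset (r := r) m).symm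

instance finite_Vm (m : ℕ) : Finite (Vm r m) :=
  Finite.of_injective (fun v : Vm r m => (⟨v.val, v.prop.1, v.prop.2.1⟩ : Am r m))
    (by intro a b h; injection h with h'; exact Subtype.ext h')


@[simp] lemma wt_true : wt r true = (r : ℤ) + 1 := rfl
@[simp] lemma wt_false : wt r false = -1 := rfl

def Forest (r k : ℕ) (w : List Bool) : Prop :=
  ws r w = -(k : ℤ) ∧ ∀ p, p <+: w → p ≠ w → -(k : ℤ) < ws r p
lemma prefix_cases {p a b : List Bool} (h : p <+: a ++ b) :
    p <+: a ∨ ∃ q, q <+: b ∧ p = a ++ q := by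
  obtain ⟨t, ht⟩ := h
  rcases List.append_eq_append_iff.1 ht with ⟨a', ha1, _⟩ | ⟨c', hc1, hc2⟩
  · exact Or.inl ⟨a', ha1.symm⟩
  · exact Or.inr ⟨c', ⟨t, hc2.symm⟩, hc1⟩

lemma forest_nil : Forest r 0 [] := by
  constructor
  · simp
  · intro p hp hne
    exact absurd (List.prefix_nil.1 hp) hne

lemma flatten_forest : ∀ bs : List (List Bool), (∀ u ∈ bs, Valid r u) →
    Forest r bs.length bs.flatten := by
  intro bs
  induction bs with
  | nil => intro _; exact forest_nil
  | cons u bs ih =>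
    intro hv
    have hu : Valid r u := hv u (by simp)
    have hf : Forest r bs.length bs.flatten := ih (fun x hx => hv x (by simp [hx]))
    rw [List.flatten_cons]
    constructor
    · rw [ws_append, hu.2.1, hf.1, List.length_cons]; push_cast; ring
    · intro p hp hne
      simp only [List.length_cons]
      rcases prefix_cases hp with h | ⟨q, hq, rfl⟩
      · rcases eq_or_ne p u with rfl | hpu
        · -- p = u : then bs ≠ []
          have hbs : bs ≠ [] := by
            rintro rfl
            simp at hne
          have h1 : 1 ≤ bs.length := List.length_pos_iff.2 hbs
          rw [hu.2.1]
          push_cast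
          omega
        · have h2 : (0:ℤ) ≤ ws r p := hu.2.2 p h hpu
          push_cast
          omega
      · have hqne : q ≠ bs.flatten := by
          rintro rfl
          exact hne rfl
        have h3 := hf.2 q hq hqne
        rw [ws_append, hu.2.1]
        push_cast at h3 ⊢
        omega

/-- preorder encoding of a tree -/
def enc : AryTree r → List Bool
  | .leaf => [false]
  | .node c => true :: (List.ofFn fun i => enc (c i)).flatten

lemma enc_length (t : AryTree r) : (enc t).length = (r + 2) * t.internals + 1 := by
  induction t with
  | leaf => simp [enc, AryTree.internals]
  | node c ih =>
    rw [enc, AryTree.internals, List.length_cons, List.length_flatten, List.map_ofFn,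
      List.sum_ofFn]
    have : ∀ i : Fin (r+2), (List.length ∘ fun i => enc (c i)) i
        = (r+2) * (c i).internals + 1 := fun i => ih i
    rw [Finset.sum_congr rfl (fun i _ => this i), Finset.sum_add_distrib, ← Finset.mul_sum]
    simp [Finset.card_univ, mul_add]
    ring

lemma enc_count (t : AryTree r) : (enc t).count true = t.internals := by
  induction t with
  | leaf => simp [enc, AryTree.internals]
  | node c ih =>
    rw [enc, AryTree.internals, List.count_cons, List.count_flatten, List.map_ofFn,
      List.sum_ofFn]
    have h4 : ∀ i : Fin (r+2), (List.count true ∘ fun i => enc (c i)) i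
        = (c i).internals := fun i => ih i
    rw [Finset.sum_congr rfl (fun i _ => h4 i)]
    simp [add_comm]

lemma enc_valid (t : AryTree r) : Valid r (enc t) := by
  induction t with
  | leaf =>
    refine ⟨by simp [enc], by simp [enc, ws, wt], ?_⟩
    intro p hp hne
    simp only [enc] at hp hne
    cases p with
    | nil => simp
    | cons b q =>
      rw [List.cons_prefix_cons] at hp
      obtain ⟨rfl, hq⟩ := hp
      rw [List.prefix_nil] at hq
      subst hq
      exact absurd rfl hne
  | node c ih =>
    have hforest : Forest r (r+2) (List.ofFn fun i => enc (c i)).flatten := by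
      have := flatten_forest (r := r) (List.ofFn fun i => enc (c i)) ?_
      · simpa using this
      · intro u hu
        obtain ⟨i, rfl⟩ := List.mem_ofFn.1 hu
        exact ih i
    refine ⟨by simp [enc], ?_, ?_⟩
    · rw [enc, ws_cons, hforest.1, wt_true]
      push_cast
      ring
    · intro p hp hne
      cases p with
      | nil => simp
      | cons b q =>
        rw [enc] at hp hne
        rw [List.cons_prefix_cons] at hp
        obtain ⟨rfl, hq⟩ := hp
        have hqne : q ≠ (List.ofFn fun i => enc (c i)).flatten := by
          rintro rfl; exact hne rfl
        have h5 := hforest.2 q hq hqne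
        rw [ws_cons, wt_true]
        push_cast at h5 ⊢
        omega

lemma valid_eq_of_append {u u' v v' : List Bool} (hu : Valid r u) (hu' : Valid r u')
    (h : u ++ v = u' ++ v') : u = u' := by
  rcases List.append_eq_append_iff.1 h with ⟨a', ha1, _⟩ | ⟨c', hc1, _⟩
  · have hpre : u <+: u' := ⟨a', ha1.symm⟩
    rcases eq_or_ne u u' with he | he
    · exact he
    · exfalso
      have := hu'.2.2 u hpre he
      rw [hu.2.1] at this
      omega
  · have hpre : u' <+: u := ⟨c', hc1.symm⟩
    rcases eq_or_ne u u' with he | he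
    · exact he
    · exfalso
      have := hu.2.2 u' hpre (fun h2 => he h2.symm)
      rw [hu'.2.1] at this
      omega

lemma blocks_eq : ∀ bs bs' : List (List Bool), (∀ u ∈ bs, Valid r u) →
    (∀ u ∈ bs', Valid r u) → bs.length = bs'.length → bs.flatten = bs'.flatten → bs = bs' := by
  intro bs
  induction bs with
  | nil =>
    intro bs' _ _ hl _
    cases bs' with
    | nil => rfl
    | cons x xs => simp at hl
  | cons u bs ih =>
    intro bs' hv hv' hl hf
    cases bs' with
    | nil => simp at hl
    | cons u' bs'' =>
      rw [List.flatten_cons, List.flatten_cons] at hf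
      have heq : u = u' := valid_eq_of_append (hv u (by simp)) (hv' u' (by simp)) hf
      subst heq
      have hf' : bs.flatten = bs''.flatten := List.append_cancel_left hf
      have := ih bs'' (fun x hx => hv x (by simp [hx])) (fun x hx => hv' x (by simp [hx]))
        (by simpa using hl) hf'
      rw [this]

lemma enc_injective : ∀ t t' : AryTree r, enc t = enc t' → t = t' := by
  intro t
  induction t with
  | leaf =>
    intro t' h
    cases t' with
    | leaf => rfl
    | node c => simp [enc] at h
  | node c ih =>
    intro t' h
    cases t' with
    | leaf => simp [enc] at h
    | node c' =>
      simp only [enc, List.cons.injEq, true_and] at h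
      have hbl := blocks_eq (List.ofFn fun i => enc (c i)) (List.ofFn fun i => enc (c' i))
        (fun u hu => by obtain ⟨i, rfl⟩ := List.mem_ofFn.1 hu; exact enc_valid _)
        (fun u hu => by obtain ⟨i, rfl⟩ := List.mem_ofFn.1 hu; exact enc_valid _)
        (by simp) h
      have hfn := List.ofFn_inj.1 hbl
      congr 1
      funext i
      exact ih i _ (congrFun hfn i)

lemma forest_zero {w : List Bool} (h : Forest r 0 w) : w = [] := by
  by_contra hne
  have := h.2 [] List.nil_prefix (fun he => hne he.symm)
  simp at this

lemma forest_split {k : ℕ} {v : List Bool} (h : Forest r (k+1) v) :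
    ∃ u v', Valid r u ∧ Forest r k v' ∧ v = u ++ v' := by
  have hex : ∃ j, ws r (v.take j) < 0 :=
    ⟨v.length, by rw [List.take_length, h.1]; push_cast; omega⟩
  classical
  obtain ⟨j, hjspec, hjmin⟩ : ∃ j, ws r (v.take j) < 0 ∧ ∀ i, i < j → 0 ≤ ws r (v.take i) :=
    ⟨Nat.find hex, Nat.find_spec hex, fun i hi => le_of_not_gt (Nat.find_min hex hi)⟩
  have hjle : j ≤ v.length := by
    by_contra hgt
    push_neg at hgt
    have h1 := hjmin v.length hgt
    rw [List.take_length, h.1] at h1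
    push_cast at h1
    omega
  have hj0 : j ≠ 0 := by
    intro h0
    rw [h0] at hjspec
    simp at hjspec
  obtain ⟨j', rfl⟩ : ∃ j', j = j' + 1 := ⟨j - 1, by omega⟩
  have hj'lt : j' < v.length := by omega
  have htake : v.take (j'+1) = v.take j' ++ [v[j']] := by
    rw [List.take_succ, List.getElem?_eq_getElem hj'lt]
    rfl
  have hws : ws r (v.take (j'+1)) = ws r (v.take j') + wt r (v[j']) := by
    rw [htake, ws_append, ws_cons, ws_nil]
    ring
  have hprev : 0 ≤ ws r (v.take j') := hjmin j' (by omega)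
  have hfalse : v[j'] = false ∧ ws r (v.take (j'+1)) = -1 := by
    cases hb : (v[j'] : Bool) with
    | true =>
      exfalso
      rw [hb, wt_true] at hws
      have : (0:ℤ) ≤ (r:ℤ) := by positivity
      omega
    | false =>
      rw [hb, wt_false] at hws
      exact ⟨rfl, by omega⟩
  set u := v.take (j'+1) with hu
  have hulen : u.length = j' + 1 := by rw [hu, List.length_take]; omega
  have huval : Valid r u := by
    refine ⟨?_, hfalse.2, ?_⟩
    · intro he
      rw [he] at hulen
      simp at hulen
    · intro p hp hpe
      have hple : p.length < j' + 1 := by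
        have h1 := hp.length_le
        rw [hulen] at h1
        rcases lt_or_eq_of_le h1 with h2 | h2
        · exact h2
        · exfalso
          apply hpe
          have := List.prefix_iff_eq_take.1 hp
          rw [this, h2, ← hulen, List.take_length]
      have hpv : p = v.take p.length := by
        have h1 : p <+: v := hp.trans (List.take_prefix _ _)
        exact List.prefix_iff_eq_take.1 h1
      rw [hpv]
      exact hjmin _ hple
  refine ⟨u, v.drop (j'+1), huval, ?_, (List.take_append_drop _ _).symm⟩
  constructor
  · have h1 : ws r v = ws r u + ws r (v.drop (j'+1)) := by
      conv_lhs => rw [← List.take_append_drop (j'+1) v]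
      rw [ws_append]
    rw [h.1] at h1
    have h2 := hfalse.2
    push_cast at h1 ⊢
    omega
  · intro p hp hpe
    obtain ⟨s, hs⟩ := hp
    have hupp : u ++ p <+: v := by
      refine ⟨s, ?_⟩
      rw [List.append_assoc, hs]
      exact List.take_append_drop _ _
    have hupne : u ++ p ≠ v := by
      intro he
      apply hpe
      have : u ++ p = u ++ v.drop (j'+1) := by
        rw [he]
        conv_lhs => rw [← List.take_append_drop (j'+1) v]
      exact List.append_cancel_left this
    have := h.2 (u ++ p) hupp hupne
    rw [ws_append, hfalse.2] at this
    push_cast at this ⊢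
    omega

lemma forest_flatten_ex : ∀ (k : ℕ) (v : List Bool), Forest r k v →
    ∃ us : List (List Bool), us.length = k ∧ (∀ u ∈ us, Valid r u) ∧ us.flatten = v := by
  intro k
  induction k with
  | zero => intro v h; exact ⟨[], rfl, by simp, (forest_zero h).symm⟩
  | succ k ih =>
    intro v h
    obtain ⟨u, v', hu, hf, rfl⟩ := forest_split h
    obtain ⟨us, h1, h2, h3⟩ := ih v' hf
    refine ⟨u :: us, by simp [h1], ?_, by simp [h3]⟩
    rintro x hx
    rcases List.mem_cons.1 hx with rfl | hx
    · exact hu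
    · exact h2 x hx

lemma length_le_flatten {us : List (List Bool)} {u : List Bool} (hu : u ∈ us) :
    u.length ≤ us.flatten.length := by
  induction us with
  | nil => simp at hu
  | cons x xs ih =>
    rw [List.flatten_cons, List.length_append]
    rcases List.mem_cons.1 hu with rfl | h
    · omega
    · have := ih h; omega

lemma exists_trees : ∀ us : List (List Bool), (∀ u ∈ us, ∃ t : AryTree r, enc t = u) →
    ∃ ts : List (AryTree r), ts.map enc = us := by
  intro us
  induction us with
  | nil => intro _; exact ⟨[], rfl⟩
  | cons u us ih =>
    intro h
    obtain ⟨t, ht⟩ := h u (by simp)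
    obtain ⟨ts, hts⟩ := ih (fun x hx => h x (by simp [hx]))
    exact ⟨t :: ts, by simp [ht, hts]⟩

lemma enc_surj_aux : ∀ (N : ℕ) (w : List Bool), w.length ≤ N → Valid r w →
    ∃ t : AryTree r, enc t = w := by
  intro N
  induction N with
  | zero =>
    intro w hl hv
    exact absurd (List.length_eq_zero_iff.1 (Nat.le_zero.1 hl)) hv.1
  | succ N ih =>
    intro w hl hv
    cases w with
    | nil => exact absurd rfl hv.1
    | cons b v =>
      cases b with
      | false =>
        have hv0 : v = [] := by
          by_contra hne
          have hp : [false] <+: false :: v := ⟨v, rfl⟩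
          have hne' : [false] ≠ false :: v := by
            intro he
            have := congrArg List.length he
            simp only [List.length_cons, List.length_nil] at this
            exact hne (List.length_eq_zero_iff.1 (by omega))
          have := hv.2.2 [false] hp hne'
          simp [ws] at this
        subst hv0
        exact ⟨AryTree.leaf, rfl⟩
      | true =>
        have hwsv : ws r v = -((r:ℤ)+2) := by
          have := hv.2.1
          rw [ws_cons, wt_true] at this
          linarith
        have hforest : Forest r (r+2) v := by
          constructor
          · rw [hwsv]; push_cast; ring
          · intro p hp hpe
            have hp' : true :: p <+: true :: v := List.cons_prefix_cons.2 ⟨rfl, hp⟩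
            have hpe' : true :: p ≠ true :: v := fun he => hpe (by injection he)
            have := hv.2.2 _ hp' hpe'
            rw [ws_cons, wt_true] at this
            push_cast
            linarith
        obtain ⟨us, hlen, hval, hflat⟩ := forest_flatten_ex (r+2) v hforest
        obtain ⟨ts, hts⟩ : ∃ ts : List (AryTree r), ts.map enc = us := by
          apply exists_trees
          intro u hu
          apply ih u ?_ (hval u hu)
          have h1 : u.length ≤ v.length := hflat ▸ length_le_flatten hu
          have h2 : v.length + 1 ≤ N + 1 := by simpa using hl
          omega
        have htl : ts.length = r + 2 := by
          have := congrArg List.length hts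
          simpa [hlen] using this
        refine ⟨AryTree.node (fun i => ts.get (Fin.cast htl.symm i)), ?_⟩
        rw [enc]
        congr 1
        rw [← hflat, ← hts]
        congr 1
        apply List.ext_getElem
        · simp [htl]
        · intro i h1 h2
          rw [List.getElem_ofFn, List.getElem_map]
          rfl

lemma enc_surj {w : List Bool} (hv : Valid r w) : ∃ t : AryTree r, enc t = w :=
  enc_surj_aux w.length w le_rfl hv


/-- `Valid` in terms of prefix counts of `true`. -/
lemma valid_of_counts {m : ℕ} {w : List Bool} (hL : w.length = Lm r m)
    (hc : w.count true = m)
    (h : ∀ t, t < w.length → t ≤ (r + 2) * ((w.take t).count true)) : Valid r w := by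
  rw [valid_take_iff (ne_nil_of_len hL) (ws_of_count hL hc)]
  intro t ht
  have h1 := h t ht
  rw [ws_eq_counts]
  have h2 : (w.take t).length = t := by rw [List.length_take]; omega
  rw [h2]
  have := h1
  push_cast
  push_cast at this
  nlinarith [this]

lemma counts_of_valid {w : List Bool} (hv : Valid r w) :
    ∀ t, t < w.length → t ≤ (r + 2) * ((w.take t).count true) := by
  intro t ht
  have h0 : 0 ≤ ws r (w.take t) := by
    rcases hv with ⟨hne, hws, hp⟩
    refine hp _ (List.take_prefix _ _) ?_
    intro he
    have := congrArg List.length he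
    rw [List.length_take] at this
    omega
  rw [ws_eq_counts] at h0
  have h2 : (w.take t).length = t := by rw [List.length_take]; omega
  rw [h2] at h0
  have : (t : ℤ) ≤ ((r:ℤ)+2) * ((w.take t).count true) := by linarith
  exact_mod_cast this

section Seq
variable {n : ℕ}

/-- positions of internal nodes determined by the sequence -/
def q (r : ℕ) (b : ℕ → ℕ) (i : ℕ) : ℕ := (r + 2) * i - b i

variable {b : ℕ → ℕ}

lemma seq_zero (h0 : ∀ i, i = 0 ∨ n < i → b i = 0) : b 0 = 0 := h0 0 (Or.inl rfl)

lemma seq_step (h0 : ∀ i, i = 0 ∨ n < i → b i = 0) (h1 : b 1 ≤ r + 1)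
    (h2 : ∀ i, 2 ≤ i → i ≤ n → b i ≤ r + 1 + b (i - 1)) :
    ∀ i, i < n → b (i + 1) ≤ r + 1 + b i := by
  intro i hi
  rcases Nat.eq_zero_or_pos i with rfl | hpos
  · simpa [seq_zero h0] using h1
  · have := h2 (i + 1) (by omega) (by omega)
    simpa using this

lemma seq_bound (h0 : ∀ i, i = 0 ∨ n < i → b i = 0) (h1 : b 1 ≤ r + 1)
    (h2 : ∀ i, 2 ≤ i → i ≤ n → b i ≤ r + 1 + b (i - 1)) :
    ∀ i, i ≤ n → b i ≤ (r + 1) * i := by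
  intro i
  induction i with
  | zero => intro _; simp [seq_zero h0]
  | succ i ih =>
    intro hle
    have hs := seq_step h0 h1 h2 i (by omega)
    have hb := ih (by omega)
    have e : (r + 1) * (i + 1) = (r + 1) * i + (r + 1) := by ring
    omega

lemma seq_bound' (h0 : ∀ i, i = 0 ∨ n < i → b i = 0) (h1 : b 1 ≤ r + 1)
    (h2 : ∀ i, 2 ≤ i → i ≤ n → b i ≤ r + 1 + b (i - 1)) :
    ∀ i, i ≤ n → b i ≤ (r + 2) * i := by
  intro i hi
  have := seq_bound h0 h1 h2 i hi
  have e : (r + 1) * i ≤ (r + 2) * i := Nat.mul_le_mul_right i (by omega)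
  omega

lemma qlt (h0 : ∀ i, i = 0 ∨ n < i → b i = 0) (h1 : b 1 ≤ r + 1)
    (h2 : ∀ i, 2 ≤ i → i ≤ n → b i ≤ r + 1 + b (i - 1)) :
    ∀ i, i < n → q r b i < q r b (i + 1) := by
  intro i hi
  have hs := seq_step h0 h1 h2 i hi
  have hb := seq_bound' h0 h1 h2 i (by omega)
  have e : (r + 2) * (i + 1) = (r + 2) * i + (r + 2) := by ring
  unfold q
  omega

lemma qmono (h0 : ∀ i, i = 0 ∨ n < i → b i = 0) (h1 : b 1 ≤ r + 1)
    (h2 : ∀ i, 2 ≤ i → i ≤ n → b i ≤ r + 1 + b (i - 1)) :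
    ∀ i j, i < j → j ≤ n → q r b i < q r b j := by
  intro i j
  induction j with
  | zero => intro h _; omega
  | succ j ih =>
    intro hij hjn
    rcases Nat.lt_or_ge i j with h | h
    · exact (ih h (by omega)).trans (qlt h0 h1 h2 j (by omega))
    · have : i = j := by omega
      subst this
      exact qlt h0 h1 h2 i (by omega)

variable (r n) in
/-- the set of positions of `true`s determined by the sequence -/
def Qset (b : ℕ → ℕ) : Finset ℕ := (Finset.range (n + 1)).image (q r b)

variable (r n) in
/-- the word encoding a sequence -/
def wordOf (b : ℕ → ℕ) : List Bool :=
  (List.range (Lm r (n + 1))).map (fun j => decide (j ∈ Qset r n b))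

lemma filter_decide_mem (Q : Finset ℕ) (t : ℕ) :
    (Finset.range t).filter (fun j => decide (j ∈ Q) = true) = Q ∩ Finset.range t := by
  ext j
  simp [Finset.mem_filter, and_comm]

lemma q_le (i : ℕ) : q r b i ≤ (r + 2) * i := by
  unfold q; omega

lemma wordOf_length : (wordOf r n b).length = Lm r (n + 1) := by simp [wordOf]

lemma wordOf_take_count (t : ℕ) (ht : t ≤ Lm r (n + 1)) :
    ((wordOf r n b).take t).count true = ((Qset r n b) ∩ Finset.range t).card := by
  rw [wordOf, ← List.map_take, List.take_range, min_eq_left ht, count_map_range,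
    filter_decide_mem]

section props
variable (h0 : ∀ i, i = 0 ∨ n < i → b i = 0) (h1 : b 1 ≤ r + 1)
    (h2 : ∀ i, 2 ≤ i → i ≤ n → b i ≤ r + 1 + b (i - 1))
include h0 h1 h2

lemma Qset_subset : Qset r n b ⊆ Finset.range (Lm r (n + 1)) := by
  intro x hx
  obtain ⟨i, hi, rfl⟩ := Finset.mem_image.1 hx
  rw [Finset.mem_range] at hi ⊢
  have := q_le (r := r) (b := b) i
  have e : (r + 2) * i ≤ (r + 2) * n := Nat.mul_le_mul_left _ (by omega)
  have e2 : (r + 2) * n ≤ (r + 2) * (n + 1) := Nat.mul_le_mul_left _ (by omega)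
  rw [Lm]
  omega

lemma Qset_injOn : Set.InjOn (q r b) ↑(Finset.range (n + 1)) := by
  intro i hi j hj he
  rw [Finset.coe_range, Set.mem_Iio] at hi hj
  rcases lt_trichotomy i j with h | h | h
  · exact absurd he (Nat.ne_of_lt (qmono h0 h1 h2 i j h (by omega)))
  · exact h
  · exact absurd he.symm (Nat.ne_of_lt (qmono h0 h1 h2 j i h (by omega)))

lemma Qset_card : (Qset r n b).card = n + 1 := by
  rw [Qset, Finset.card_image_of_injOn (Qset_injOn h0 h1 h2), Finset.card_range]

lemma wordOf_count : (wordOf r n b).count true = n + 1 := by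
  rw [wordOf, count_map_range, filter_decide_mem,
    Finset.inter_eq_left.2 (Qset_subset h0 h1 h2), Qset_card h0 h1 h2]

lemma wordOf_valid : Valid r (wordOf r n b) := by
  apply valid_of_counts (wordOf_length) (wordOf_count h0 h1 h2)
  intro t ht
  rw [wordOf_length] at ht
  rw [wordOf_take_count t (by omega)]
  set c := ((Qset r n b) ∩ Finset.range t).card with hc
  have hcle : c ≤ n + 1 := by
    rw [hc]
    calc ((Qset r n b) ∩ Finset.range t).card ≤ (Qset r n b).card :=
          Finset.card_le_card Finset.inter_subset_left
    _ = n + 1 := Qset_card h0 h1 h2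
  rcases Nat.lt_or_ge c (n + 1) with hclt | hcge
  · -- c ≤ n : q c ≥ t
    have hqc : t ≤ q r b c := by
      by_contra hlt
      push_neg at hlt
      have hsub : (Finset.range (c + 1)).image (q r b) ⊆ (Qset r n b) ∩ Finset.range t := by
        intro x hx
        obtain ⟨i, hi, rfl⟩ := Finset.mem_image.1 hx
        rw [Finset.mem_range] at hi
        refine Finset.mem_inter.2 ⟨Finset.mem_image.2 ⟨i, Finset.mem_range.2 (by omega), rfl⟩, ?_⟩
        rw [Finset.mem_range]
        rcases Nat.lt_or_ge i c with h | h
        · exact lt_trans (qmono h0 h1 h2 i c h (by omega)) hlt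
        · have : i = c := by omega
          subst this; exact hlt
      have hcard : ((Finset.range (c + 1)).image (q r b)).card = c + 1 := by
        rw [Finset.card_image_of_injOn, Finset.card_range]
        intro i hi j hj he
        rw [Finset.coe_range, Set.mem_Iio] at hi hj
        exact Qset_injOn h0 h1 h2 (by rw [Finset.coe_range, Set.mem_Iio]; omega)
          (by rw [Finset.coe_range, Set.mem_Iio]; omega) he
      have := Finset.card_le_card hsub
      rw [hcard, ← hc] at this
      omega
    have := q_le (r := r) (b := b) c
    omega
  · -- c = n+1
    have e : (r + 2) * c ≥ (r + 2) * (n + 1) := Nat.mul_le_mul_left _ hcge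
    rw [Lm] at ht
    omega

end props

lemma map_range_inj {L : ℕ} {g g' : ℕ → Bool}
    (h : (List.range L).map g = (List.range L).map g') : ∀ j, j < L → g j = g' j := by
  intro j hj
  have h1 : ((List.range L).map g)[j]'(by simpa using hj)
      = ((List.range L).map g')[j]'(by simpa using hj) := List.getElem_of_eq h _
  simpa using h1

section inj
variable (h0 : ∀ i, i = 0 ∨ n < i → b i = 0) (h1 : b 1 ≤ r + 1)
    (h2 : ∀ i, 2 ≤ i → i ≤ n → b i ≤ r + 1 + b (i - 1))
include h0 h1 h2

lemma qemb_strictMono : StrictMono (fun i : Fin (n + 1) => q r b i.val) := by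
  intro i j hij
  exact qmono h0 h1 h2 i.val j.val hij (by omega)

lemma q_eq_orderEmb (Q : Finset ℕ) (hcard : Q.card = n + 1) (hsub : Qset r n b = Q) :
    ∀ i : Fin (n + 1), q r b i.val = Q.orderEmbOfFin hcard i := by
  have he1 : OrderEmbedding.ofStrictMono _ (qemb_strictMono h0 h1 h2)
      = Q.orderEmbOfFin hcard :=
    Finset.orderEmbOfFin_unique' _
      (fun x => by rw [← hsub]; exact Finset.mem_image.2 ⟨x.val, Finset.mem_range.2 x.isLt, rfl⟩)
  intro i
  exact congrArg (fun f : Fin (n + 1) ↪o ℕ => f i) he1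

end inj

lemma seq_inj {b b' : ℕ → ℕ}
    (h0 : ∀ i, i = 0 ∨ n < i → b i = 0) (h1 : b 1 ≤ r + 1)
    (h2 : ∀ i, 2 ≤ i → i ≤ n → b i ≤ r + 1 + b (i - 1))
    (h0' : ∀ i, i = 0 ∨ n < i → b' i = 0) (h1' : b' 1 ≤ r + 1)
    (h2' : ∀ i, 2 ≤ i → i ≤ n → b' i ≤ r + 1 + b' (i - 1))
    (h : wordOf r n b = wordOf r n b') : b = b' := by
  have hQ : Qset r n b = Qset r n b' := by
    apply Finset.ext
    intro j
    rcases Nat.lt_or_ge j (Lm r (n + 1)) with hj | hj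
    · have hd := map_range_inj h j hj
      simp only [decide_eq_decide] at hd
      exact hd
    · constructor <;> intro hmem
      · exact absurd (Finset.mem_range.1 (Qset_subset h0 h1 h2 hmem)) (by omega)
      · exact absurd (Finset.mem_range.1 (Qset_subset h0' h1' h2' hmem)) (by omega)
  have hq : ∀ i : Fin (n + 1), q r b i.val = q r b' i.val := by
    intro i
    rw [q_eq_orderEmb h0 h1 h2 (Qset r n b) (Qset_card h0 h1 h2) rfl i,
      q_eq_orderEmb h0' h1' h2' (Qset r n b) (Qset_card h0 h1 h2) hQ.symm i]
  funext i
  rcases Nat.lt_or_ge n i with hgt | hle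
  · rw [h0 i (Or.inr hgt), h0' i (Or.inr hgt)]
  · have := hq ⟨i, by omega⟩
    simp only [q] at this
    have hb1 := seq_bound' h0 h1 h2 i hle
    have hb2 := seq_bound' h0' h1' h2' i hle
    omega

lemma seq_surj (v : List Bool) (hL : v.length = Lm r (n + 1))
    (hc : v.count true = n + 1) (hv : Valid r v) (hn : 1 ≤ n) :
    ∃ b : ℕ → ℕ, (∀ i, i = 0 ∨ n < i → b i = 0) ∧ b 1 ≤ r + 1 ∧
      (∀ i, 2 ≤ i → i ≤ n → b i ≤ r + 1 + b (i - 1)) ∧ wordOf r n b = v := by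
  classical
  have hv_eq : v = (List.range (Lm r (n + 1))).map (fun j => v.getD j false) := by
    conv_lhs => rw [eq_map_range v]
    rw [hL]
  set P : Finset ℕ := (Finset.range (Lm r (n + 1))).filter (fun j => v.getD j false = true)
    with hP
  have hPsub : P ⊆ Finset.range (Lm r (n + 1)) := Finset.filter_subset _ _
  have hPcard : P.card = n + 1 := by
    have hcc := hc
    rw [hv_eq, count_map_range] at hcc
    exact hcc
  set e := P.orderEmbOfFin hPcard with he
  have hmem : ∀ i, e i ∈ P := fun i => Finset.orderEmbOfFin_mem P hPcard i
  have heL : ∀ i, (e i) < Lm r (n + 1) := fun i => Finset.mem_range.1 (hPsub (hmem i))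
  have hrange : ∀ x, x ∈ P ↔ ∃ j : Fin (n + 1), e j = x := by
    intro x
    constructor
    · intro hx
      have hx2 : x ∈ Set.range e := by rw [Finset.range_orderEmbOfFin]; exact hx
      obtain ⟨j, hj⟩ := hx2
      exact ⟨j, hj⟩
    · rintro ⟨j, rfl⟩
      exact hmem j
  have hcount : ∀ t, t ≤ Lm r (n + 1) →
      ((v.take t).count true) = (P ∩ Finset.range t).card := by
    intro t ht
    have hseteq : (Finset.range t).filter (fun j => v.getD j false = true)
        = P ∩ Finset.range t := by
      rw [hP]
      apply Finset.ext
      intro j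
      simp only [Finset.mem_filter, Finset.mem_inter, Finset.mem_range]
      constructor
      · rintro ⟨hjt, hj⟩; exact ⟨⟨by omega, hj⟩, hjt⟩
      · rintro ⟨⟨_, hj⟩, hjt⟩; exact ⟨hjt, hj⟩
    rw [hv_eq, ← List.map_take, List.take_range, min_eq_left ht, count_map_range, hseteq]
  have hvalid : ∀ t, t < Lm r (n + 1) → t ≤ (r + 2) * ((v.take t).count true) := by
    have := counts_of_valid hv
    rw [hL] at this
    exact this
  have hIio : ∀ i : Fin (n + 1), (P ∩ Finset.range (e i)).card = i.val := by
    intro i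
    have himg : P ∩ Finset.range (e i) = (Finset.Iio i).image e := by
      ext x
      simp only [Finset.mem_inter, Finset.mem_range, Finset.mem_image, Finset.mem_Iio]
      constructor
      · rintro ⟨hxP, hxlt⟩
        obtain ⟨j, rfl⟩ := (hrange x).1 hxP
        exact ⟨j, e.lt_iff_lt.1 hxlt, rfl⟩
      · rintro ⟨j, hj, rfl⟩
        exact ⟨hmem j, e.lt_iff_lt.2 hj⟩
    rw [himg, Finset.card_image_of_injective _ e.injective, Fin.card_Iio]
  have hei : ∀ i : Fin (n + 1), (e i : ℕ) ≤ (r + 2) * i.val := by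
    intro i
    have hx := hvalid (e i) (heL i)
    rw [hcount _ (le_of_lt (heL i)), hIio] at hx
    exact hx
  have he0 : (e 0 : ℕ) = 0 := by
    have hL1 : 1 < Lm r (n + 1) := by
      have h := Nat.mul_pos (show 0 < r + 2 by omega) (show 0 < n + 1 by omega)
      rw [Lm]; omega
    have hx := hvalid 1 hL1
    rw [hcount 1 (le_of_lt hL1)] at hx
    have h01 : 0 < (P ∩ Finset.range 1).card := by
      by_contra hzero
      push_neg at hzero
      have hz : (P ∩ Finset.range 1).card = 0 := by omega
      rw [hz, Nat.mul_zero] at hx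
      omega
    obtain ⟨x, hx2⟩ := Finset.card_pos.1 h01
    have hx0 : x = 0 := by
      have := Finset.mem_range.1 (Finset.mem_inter.1 hx2).2
      omega
    subst hx0
    obtain ⟨j, hj⟩ := (hrange 0).1 (Finset.mem_inter.1 hx2).1
    have hmono := e.monotone (Fin.zero_le j)
    omega
  -- natural-number version of e
  set E : ℕ → ℕ := fun i => if h : i < n + 1 then e ⟨i, h⟩ else 0 with hE
  have hEdef : ∀ i (h : i < n + 1), E i = e ⟨i, h⟩ := by
    intro i h
    rw [hE]
    exact dif_pos h
  have hE0 : E 0 = 0 := by rw [hEdef 0 (by omega)]; exact he0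
  have hEmono : ∀ i j, i < j → j ≤ n → E i < E j := by
    intro i j hij hjn
    rw [hEdef i (by omega), hEdef j (by omega)]
    exact e.strictMono (by simp [Fin.mk_lt_mk]; omega)
  have hEbound : ∀ i, i ≤ n → E i ≤ (r + 2) * i := by
    intro i hi
    rw [hEdef i (by omega)]
    exact hei ⟨i, by omega⟩
  have hErange : ∀ x, x ∈ P ↔ ∃ i, i ≤ n ∧ E i = x := by
    intro x
    rw [hrange x]
    constructor
    · rintro ⟨j, rfl⟩
      exact ⟨j.val, by omega, by rw [hEdef j.val (by omega)]⟩
    · rintro ⟨i, hi, rfl⟩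
      refine ⟨⟨i, by omega⟩, ?_⟩
      rw [hEdef i (by omega)]
  set b : ℕ → ℕ := fun i => if 1 ≤ i ∧ i ≤ n then (r + 2) * i - E i else 0 with hb
  have hbv : ∀ i, 1 ≤ i → i ≤ n → b i = (r + 2) * i - E i := by
    intro i hi1 hi2
    rw [hb]
    simp only [if_pos (And.intro hi1 hi2)]
  have hb0 : ∀ i, i = 0 ∨ n < i → b i = 0 := by
    intro i hi
    rw [hb]
    simp only []
    rw [if_neg (by omega)]
  have hb1 : b 1 ≤ r + 1 := by
    rw [hbv 1 (by omega) hn]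
    have := hEmono 0 1 (by omega) hn
    omega
  have hb2 : ∀ i, 2 ≤ i → i ≤ n → b i ≤ r + 1 + b (i - 1) := by
    intro i hi2 hin
    obtain ⟨k, rfl⟩ : ∃ k, i = k + 2 := ⟨i - 2, by omega⟩
    have hstep := hEmono (k + 1) (k + 2) (by omega) hin
    have hbound := hEbound (k + 1) (by omega)
    rw [hbv (k + 2) (by omega) hin]
    have hsimp : k + 2 - 1 = k + 1 := by omega
    rw [hsimp, hbv (k + 1) (by omega) (by omega)]
    have hexp : (r + 2) * (k + 2) = (r + 2) * (k + 1) + (r + 2) := by ring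
    omega
  -- q agrees with E
  have hqE : ∀ i, i ≤ n → q r b i = E i := by
    intro i hi
    rcases Nat.eq_zero_or_pos i with rfl | hpos
    · rw [q, hb0 0 (Or.inl rfl), hE0]
      omega
    · rw [q, hbv i hpos hi]
      have := hEbound i hi
      omega
  have hQP : Qset r n b = P := by
    apply Finset.ext
    intro x
    rw [Qset, Finset.mem_image, hErange]
    constructor
    · rintro ⟨i, hi, rfl⟩
      rw [Finset.mem_range] at hi
      exact ⟨i, by omega, (hqE i (by omega)).symm⟩
    · rintro ⟨i, hi, rfl⟩
      exact ⟨i, Finset.mem_range.2 (by omega), hqE i hi⟩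
  refine ⟨b, hb0, hb1, hb2, ?_⟩
  rw [wordOf, hQP, hv_eq]
  apply List.map_congr_left
  intro j hj
  rw [List.mem_range] at hj
  by_cases h : v.getD j false = true
  · simp [hP, Finset.mem_filter, hj, h]
  · simp only [Bool.not_eq_true] at h
    simp [hP, Finset.mem_filter, hj, h]

end Seq

section Assemble
variable {r n : ℕ}

variable (r) in
noncomputable def treeFun (m : ℕ) (x : {t : AryTree r // t.internals = m}) : Vm r m :=
  ⟨enc x.val, by rw [enc_length, x.prop]; rfl, by rw [enc_count, x.prop],
   enc_valid x.val⟩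

lemma treeFun_bijective (m : ℕ) : Function.Bijective (treeFun r m) := by
  constructor
  · rintro x y h
    exact Subtype.ext (enc_injective _ _ (congrArg Subtype.val h))
  · rintro ⟨v, hL, hc, hv⟩
    obtain ⟨t, ht⟩ := enc_surj hv
    have hint : t.internals = m := by
      rw [← enc_count t, ht, hc]
    exact ⟨⟨t, hint⟩, Subtype.ext ht⟩

variable (r n) in
noncomputable def treeEquiv (m : ℕ) : {t : AryTree r // t.internals = m} ≃ Vm r m :=
  Equiv.ofBijective _ (treeFun_bijective m)

variable (r n) in
noncomputable def seqFun (x : {b : ℕ → ℕ // (∀ i, i = 0 ∨ n < i → b i = 0) ∧ b 1 ≤ r + 1 ∧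
    (∀ i, 2 ≤ i → i ≤ n → b i ≤ r + 1 + b (i - 1))}) : Vm r (n + 1) :=
  ⟨wordOf r n x.val, wordOf_length,
    wordOf_count x.prop.1 x.prop.2.1 x.prop.2.2,
    wordOf_valid x.prop.1 x.prop.2.1 x.prop.2.2⟩

lemma seqFun_bijective (hn : 1 ≤ n) : Function.Bijective (seqFun r n) := by
  constructor
  · rintro x y h
    exact Subtype.ext (seq_inj x.prop.1 x.prop.2.1 x.prop.2.2 y.prop.1 y.prop.2.1 y.prop.2.2
      (congrArg Subtype.val h))
  · rintro ⟨v, hL, hc, hv⟩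
    obtain ⟨b, hb0, hb1, hb2, hw⟩ := seq_surj v hL hc hv hn
    exact ⟨⟨b, hb0, hb1, hb2⟩, Subtype.ext hw⟩

variable (r n) in
noncomputable def seqEquiv (hn : 1 ≤ n) :
    {b : ℕ → ℕ // (∀ i, i = 0 ∨ n < i → b i = 0) ∧ b 1 ≤ r + 1 ∧
      (∀ i, 2 ≤ i → i ≤ n → b i ≤ r + 1 + b (i - 1))} ≃ Vm r (n + 1) :=
  Equiv.ofBijective _ (seqFun_bijective hn)

end Assemble
end FC

/-- There is a bijection between nonnegative integer sequences
`(b_1, …, b_n)` with `b_1 ≤ r+1` and `b_i ≤ r+1+b_{i-1}` for `2 ≤ i ≤ n`, and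
`(r+2)`-ary rooted plane trees with `n+1` internal nodes; in particular the number
of such sequences is the Fuss–Catalan number
`(1/((r+1)(n+1)+1)) * C((r+2)(n+1), n+1)`. -/
theorem stmt2 (r n : ℕ) (hn : 1 ≤ n) :
    Nonempty (
      ({b : ℕ → ℕ |
        (∀ i, i = 0 ∨ n < i → b i = 0) ∧
        b 1 ≤ r + 1 ∧
        (∀ i, 2 ≤ i → i ≤ n → b i ≤ r + 1 + b (i - 1))} : Set (ℕ → ℕ)) ≃
      {t : AryTree r | t.internals = n + 1}) ∧
    (({b : ℕ → ℕ |
        (∀ i, i = 0 ∨ n < i → b i = 0) ∧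
        b 1 ≤ r + 1 ∧
        (∀ i, 2 ≤ i → i ≤ n → b i ≤ r + 1 + b (i - 1))}.ncard : ℚ)
      = (Nat.choose ((r + 2) * (n + 1)) (n + 1) : ℚ) / ((r + 1) * (n + 1) + 1)) := by
  constructor
  · exact ⟨(FC.seqEquiv r n hn).trans (FC.treeEquiv r (n + 1)).symm⟩
  · have hcard : ({b : ℕ → ℕ |
        (∀ i, i = 0 ∨ n < i → b i = 0) ∧
        b 1 ≤ r + 1 ∧
        (∀ i, 2 ≤ i → i ≤ n → b i ≤ r + 1 + b (i - 1))} : Set (ℕ → ℕ)).ncard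
        = Nat.card (FC.Vm r (n + 1)) := by
      rw [← Nat.card_coe_set_eq]
      exact Nat.card_congr (FC.seqEquiv r n hn)
    have hA : (FC.Lm r (n + 1)).choose (n + 1)
        = Nat.card (FC.Vm r (n + 1)) * FC.Lm r (n + 1) := by
      calc (FC.Lm r (n + 1)).choose (n + 1) = Nat.card (FC.Am r (n + 1)) :=
            (FC.card_Am _).symm
      _ = Nat.card (FC.Vm r (n + 1) × Fin (FC.Lm r (n + 1))) :=
            Nat.card_congr (FC.cycleEquiv _)
      _ = Nat.card (FC.Vm r (n + 1)) * FC.Lm r (n + 1) := by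
            rw [Nat.card_prod]
            congr 1
            simp
    set N := Nat.card (FC.Vm r (n + 1)) with hN
    have hL : FC.Lm r (n + 1) = (r + 2) * (n + 1) + 1 := rfl
    have key : ((r + 2) * (n + 1)).choose (n + 1) = N * ((r + 1) * (n + 1) + 1) := by
      have h1 := Nat.choose_mul_succ_eq ((r + 2) * (n + 1)) (n + 1)
      have h2 : (r + 2) * (n + 1) + 1 - (n + 1) = (r + 1) * (n + 1) + 1 := by
        clear hcard hA hN h1
        have e : (r + 2) * (n + 1) = (r + 1) * (n + 1) + (n + 1) := by ring
        omega
      rw [h2] at h1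
      rw [hL] at hA
      rw [hA] at h1
      have hLpos : 0 < (r + 2) * (n + 1) + 1 := by positivity
      have h3 : ((r + 2) * (n + 1)).choose (n + 1) * ((r + 2) * (n + 1) + 1)
          = (N * ((r + 1) * (n + 1) + 1)) * ((r + 2) * (n + 1) + 1) := by
        rw [h1]; ring
      exact Nat.eq_of_mul_eq_mul_right hLpos h3
    rw [hcard]
    have keyQ : ((Nat.choose ((r + 2) * (n + 1)) (n + 1) : ℕ) : ℚ)
        = (N : ℚ) * (((r : ℚ) + 1) * ((n : ℚ) + 1) + 1) := by
      exact_mod_cast congrArg (Nat.cast : ℕ → ℚ) key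
    rw [keyQ]
    have hd : ((r : ℚ) + 1) * ((n : ℚ) + 1) + 1 ≠ 0 := by positivity
    rw [mul_div_assoc, div_self hd, mul_one]
end

section
/- The number of nonnegative integer sequences (b_1, ..., b_n) satisfying b_1 ≤ r+1 and b_i ≤ r+1+b_{i-1} for 2 ≤ i ≤ n equals the Fuss–Catalan number (1/((r+1)(n+1)+1)) * binomial((r+2)(n+1), n+1). -/
open Finset
open scoped Fin.NatCast Fin.CommRing

namespace FussAux

/-- Word length. -/
abbrev KK (m N : ℕ) : ℕ := (m+1)*N + 1

abbrev FK (m N : ℕ) := Fin (KK m N)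

/-- step: up by m at positions in A, else down 1 -/
def stp (m N : ℕ) (A : Finset (FK m N)) (j : ℕ) : ℤ :=
  if ((j : FK m N)) ∈ A then (m : ℤ) else -1

/-- prefix sums -/
def HH (m N : ℕ) (A : Finset (FK m N)) (t : ℕ) : ℤ := ∑ j ∈ range t, stp m N A j

lemma stp_per (m N : ℕ) (A : Finset (FK m N)) (j : ℕ) :
    stp m N A (j + KK m N) = stp m N A j := by
  have h : ((j + KK m N : ℕ) : FK m N) = ((j : ℕ) : FK m N) := by
    rw [Nat.cast_add, Fin.natCast_self, add_zero]
  unfold stp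
  rw [h]

lemma HH_add (m N : ℕ) (A : Finset (FK m N)) (v t : ℕ) :
    HH m N A (v + t) = HH m N A v + ∑ j ∈ range t, stp m N A (v + j) := by
  induction t with
  | zero => simp
  | succ t ih =>
      rw [show v + (t+1) = (v + t) + 1 by omega]
      unfold HH at *
      rw [Finset.sum_range_succ, ih, Finset.sum_range_succ]
      ring

lemma window (m N : ℕ) (A : Finset (FK m N)) :
    ∀ v, ∑ j ∈ range (KK m N), stp m N A (v + j) = HH m N A (KK m N)
  | 0 => by simp [HH]
  | (v+1) => by
      have h1 := Finset.sum_range_succ (fun j => stp m N A (v + j)) (KK m N)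
      have h2 := Finset.sum_range_succ' (fun j => stp m N A (v + j)) (KK m N)
      have h3 : stp m N A (v + KK m N) = stp m N A (v + 0) := by
        rw [Nat.add_zero]; exact stp_per m N A v
      have h4 : ∑ j ∈ range (KK m N), stp m N A (v + 1 + j)
          = ∑ j ∈ range (KK m N), stp m N A (v + (j + 1)) := by
        apply Finset.sum_congr rfl; intro j _; congr 1; omega
      rw [h4]
      have : ∑ j ∈ range (KK m N), stp m N A (v + (j + 1))
          = ∑ j ∈ range (KK m N), stp m N A (v + j) := by
        have := h1.symm.trans h2
        rw [h3] at this
        linarith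
      rw [this, window m N A v]

lemma sum_stp_count (m N : ℕ) (A : Finset (FK m N)) (v t : ℕ) :
    ∑ j ∈ range t, stp m N A (v + j)
      = (m+1) * (((range t).filter (fun j => (((v + j : ℕ)) : FK m N) ∈ A)).card : ℤ) - t := by
  induction t with
  | zero => simp
  | succ t ih =>
      rw [Finset.sum_range_succ, ih, Finset.range_add_one, Finset.filter_insert]
      by_cases h : (((v + t : ℕ)) : FK m N) ∈ A
      · rw [if_pos h]
        rw [Finset.card_insert_of_notMem (by simp)]
        unfold stp
        rw [if_pos h]
        push_cast
        ring
      · rw [if_neg h]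
        unfold stp
        rw [if_neg h]
        push_cast
        ring

lemma HH_count (m N : ℕ) (A : Finset (FK m N)) (t : ℕ) :
    HH m N A t
      = (m+1) * (((range t).filter (fun j => ((j : ℕ) : FK m N) ∈ A)).card : ℤ) - t := by
  have := sum_stp_count m N A 0 t
  simpa [HH] using this

lemma card_filter_univ (m N : ℕ) (A : Finset (FK m N)) :
    ((range (KK m N)).filter (fun j => ((j : ℕ) : FK m N) ∈ A)).card = A.card := by
  apply Finset.card_bij (fun j _ => ((j : ℕ) : FK m N))
  · intro a ha
    exact (Finset.mem_filter.1 ha).2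
  · intro a₁ ha₁ a₂ ha₂ h
    have h1 : a₁ < KK m N := Finset.mem_range.1 (Finset.mem_filter.1 ha₁).1
    have h2 : a₂ < KK m N := Finset.mem_range.1 (Finset.mem_filter.1 ha₂).1
    have := congrArg Fin.val h
    rwa [Fin.val_cast_of_lt h1, Fin.val_cast_of_lt h2] at this
  · intro b hb
    refine ⟨b.val, Finset.mem_filter.2 ⟨Finset.mem_range.2 b.isLt, ?_⟩, Fin.cast_val_eq_self b⟩
    rw [Fin.cast_val_eq_self]; exact hb

lemma HH_K (m N : ℕ) (A : Finset (FK m N)) (h : A.card = N) :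
    HH m N A (KK m N) = -1 := by
  rw [HH_count, card_filter_univ, h]
  push_cast
  ring

lemma HH_per (m N : ℕ) (A : Finset (FK m N)) (h : A.card = N) (t : ℕ) :
    HH m N A (t + KK m N) = HH m N A t - 1 := by
  rw [HH_add, window, HH_K m N A h]
  ring

/-- abstract cycle lemma -/
lemma cycle_lemma {K : ℕ} (hK : 0 < K) (H : ℕ → ℤ) (hper : ∀ t, H (t + K) = H t - 1) :
    ∃! c, c < K ∧ ∀ t < K, H c ≤ H (c + t) := by
  have hne : (Finset.range K).Nonempty := ⟨0, Finset.mem_range.2 hK⟩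
  obtain ⟨c₀, hc₀, hmin⟩ := Finset.exists_min_image (Finset.range K) H hne
  have hP : ∃ c, c < K ∧ ∀ u, u < K → H c ≤ H u :=
    ⟨c₀, Finset.mem_range.1 hc₀, fun u hu => hmin u (Finset.mem_range.2 hu)⟩
  obtain ⟨hcK, hcmin⟩ := Nat.find_spec hP
  set c := Nat.find hP with hc
  have good : ∀ t < K, H c ≤ H (c + t) := by
    intro t ht
    by_cases h : c + t < K
    · exact hcmin _ h
    · have hu : c + t - K < c := by omega
      have huK : c + t - K < K := by omega
      have hnot := Nat.find_min hP hu
      push_neg at hnot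
      obtain ⟨w, hwK, hw⟩ := hnot huK
      have h1 : H c ≤ H w := hcmin w hwK
      have h2 : H (c + t) = H (c + t - K) - 1 := by
        have h3 := hper (c + t - K)
        rw [Nat.sub_add_cancel (by omega)] at h3
        exact h3
      linarith
  refine ⟨c, ⟨hcK, good⟩, ?_⟩
  rintro c' ⟨hc'K, good'⟩
  by_contra hne'
  rcases Nat.lt_or_ge c' c with h | h
  · have h1 : H c' ≤ H c := by
      have := good' (c - c') (by omega)
      rwa [Nat.add_sub_cancel' (le_of_lt h)] at this
    have h2 : H c ≤ H (c' + K) := by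
      have := good (c' + K - c) (by omega)
      rwa [Nat.add_sub_cancel' (by omega)] at this
    rw [hper c'] at h2
    linarith
  · have hlt : c < c' := by omega
    have h1 : H c ≤ H c' := by
      have := good (c' - c) (by omega)
      rwa [Nat.add_sub_cancel' (le_of_lt hlt)] at this
    have h2 : H c' ≤ H (c + K) := by
      have := good' (c + K - c') (by omega)
      rwa [Nat.add_sub_cancel' (by omega)] at this
    rw [hper c] at h2
    linarith


/-- rotate a word: position j of `rot c X` is position j + c of `X`. -/
def rot (m N : ℕ) (c : FK m N) (X : Finset (FK m N)) : Finset (FK m N) :=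
  X.image (fun x => x - c)

lemma mem_rot (m N : ℕ) (c : FK m N) (X : Finset (FK m N)) (x : FK m N) :
    x ∈ rot m N c X ↔ x + c ∈ X := by
  constructor
  · intro h
    obtain ⟨y, hy, rfl⟩ := Finset.mem_image.1 h
    rwa [sub_add_cancel]
  · intro h
    exact Finset.mem_image.2 ⟨x + c, h, by rw [add_sub_cancel_right]⟩

lemma rot_rot (m N : ℕ) (c d : FK m N) (X : Finset (FK m N)) :
    rot m N c (rot m N d X) = rot m N (c + d) X := by
  ext x
  rw [mem_rot, mem_rot, mem_rot, add_assoc]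

lemma rot_zero (m N : ℕ) (X : Finset (FK m N)) : rot m N 0 X = X := by
  ext x; rw [mem_rot, add_zero]

lemma rot_card (m N : ℕ) (c : FK m N) (X : Finset (FK m N)) :
    (rot m N c X).card = X.card :=
  Finset.card_image_of_injective _ (sub_left_injective)

/-- "good word": the path stays nonnegative on all proper prefixes. -/
def GoodW (m N : ℕ) (A : Finset (FK m N)) : Prop :=
  ∀ t < KK m N, 0 ≤ HH m N A t

lemma HH_rot (m N : ℕ) (c : FK m N) (X : Finset (FK m N)) (t : ℕ) :
    HH m N (rot m N c X) t = HH m N X (c.val + t) - HH m N X c.val := by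
  have hst : ∀ j : ℕ, stp m N (rot m N c X) j = stp m N X (c.val + j) := by
    intro j
    unfold stp
    have h : ((j : FK m N)) ∈ rot m N c X ↔ (((c.val + j : ℕ)) : FK m N) ∈ X := by
      rw [mem_rot]
      constructor <;> intro h'
      · convert h' using 2
        push_cast
        ring
      · convert h' using 2
        push_cast
        ring
    by_cases hj : ((j : FK m N)) ∈ rot m N c X
    · rw [if_pos hj, if_pos (h.1 hj)]
    · rw [if_neg hj, if_neg (fun hh => hj (h.2 hh))]
  have h1 : HH m N (rot m N c X) t = ∑ j ∈ range t, stp m N X (c.val + j) :=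
    Finset.sum_congr rfl fun j _ => hst j
  rw [h1, HH_add]
  ring

lemma goodW_rot_iff (m N : ℕ) (c : FK m N) (X : Finset (FK m N)) :
    GoodW m N (rot m N c X) ↔ ∀ t < KK m N, HH m N X c.val ≤ HH m N X (c.val + t) := by
  unfold GoodW
  constructor <;> intro h t ht
  · have := h t ht
    rw [HH_rot] at this
    linarith
  · rw [HH_rot]
    have := h t ht
    linarith

noncomputable instance (m N : ℕ) : DecidablePred (GoodW m N) := Classical.decPred _

/-- all words -/
noncomputable def AllF (m N : ℕ) : Finset (Finset (FK m N)) :=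
  Finset.univ.powersetCard N

noncomputable def GF (m N : ℕ) : Finset (Finset (FK m N)) :=
  (AllF m N).filter (GoodW m N)

lemma mem_AllF (m N : ℕ) (A : Finset (FK m N)) : A ∈ AllF m N ↔ A.card = N := by
  unfold AllF
  rw [Finset.mem_powersetCard_univ]

lemma mem_GF (m N : ℕ) (A : Finset (FK m N)) :
    A ∈ GF m N ↔ A.card = N ∧ GoodW m N A := by
  unfold GF
  rw [Finset.mem_filter, mem_AllF]

lemma exists_unique_rot (m N : ℕ) (X : Finset (FK m N)) (hX : X.card = N) :
    ∃! c : FK m N, GoodW m N (rot m N c X) := by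
  obtain ⟨v, ⟨hvK, hv⟩, huniq⟩ :=
    cycle_lemma (K := KK m N) (by positivity) (HH m N X) (HH_per m N X hX)
  refine ⟨⟨v, hvK⟩, (goodW_rot_iff m N ⟨v, hvK⟩ X).2 hv, ?_⟩
  intro c hc
  exact Fin.ext (huniq c.val ⟨c.isLt, (goodW_rot_iff m N c X).1 hc⟩)

lemma card_AllF_eq (m N : ℕ) : (AllF m N).card = (KK m N) * (GF m N).card := by
  have himg : AllF m N = (Finset.univ ×ˢ GF m N).image
      (fun p : FK m N × Finset (FK m N) => rot m N (-p.1) p.2) := by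
    apply Finset.Subset.antisymm
    · intro X hX
      rw [mem_AllF] at hX
      obtain ⟨c, hc, -⟩ := exists_unique_rot m N X hX
      refine Finset.mem_image.2 ⟨(c, rot m N c X), ?_, ?_⟩
      · refine Finset.mem_product.2 ⟨Finset.mem_univ _, ?_⟩
        rw [mem_GF]
        exact ⟨by rw [rot_card, hX], hc⟩
      · rw [rot_rot, neg_add_cancel, rot_zero]
    · intro X hX
      obtain ⟨p, hp, rfl⟩ := Finset.mem_image.1 hX
      have := (Finset.mem_product.1 hp).2
      rw [mem_GF] at this
      rw [mem_AllF, rot_card]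
      exact this.1
  rw [himg, Finset.card_image_of_injOn, Finset.card_product]
  · simp
  · rintro ⟨c, A⟩ hcA ⟨c', A'⟩ hcA' h
    simp only [Finset.mem_coe, Finset.mem_product, mem_GF] at hcA hcA'
    have h' : rot m N (-c) A = rot m N (-c') A' := h
    have hA : A = rot m N c (rot m N (-c) A) := by
      rw [rot_rot, add_neg_cancel, rot_zero]
    have hA' : A' = rot m N c' (rot m N (-c') A') := by
      rw [rot_rot, add_neg_cancel, rot_zero]
    have hXcard : (rot m N (-c) A).card = N := by rw [rot_card]; exact hcA.2.1
    obtain ⟨c₀, -, huniq⟩ := exists_unique_rot m N (rot m N (-c) A) hXcard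
    have e1 : c = c₀ := huniq c (by
      show GoodW m N (rot m N c (rot m N (-c) A))
      rw [← hA]; exact hcA.2.2)
    have e2 : c' = c₀ := huniq c' (by
      show GoodW m N (rot m N c' (rot m N (-c) A))
      rw [h', ← hA']; exact hcA'.2.2)
    have ec : c = c' := e1.trans e2.symm
    subst ec
    have eA : A = A' := by rw [hA, h', ← hA']
    rw [eA]

lemma card_GF (m N : ℕ) : (GF m N).card * (m * N + 1) = ((m+1)*N).choose N := by
  have h0 : (AllF m N).card = (KK m N).choose N := by
    unfold AllF
    rw [Finset.card_powersetCard, Finset.card_univ, Fintype.card_fin]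
  have h1 : (KK m N) * (GF m N).card = (KK m N).choose N := by
    rw [← card_AllF_eq, h0]
  -- choose identity:  K * C((m+1)N, N) = C(K, N) * (m*N+1)
  have h2 : (KK m N) * (((m+1)*N).choose N) = (KK m N).choose N * (m*N+1) := by
    have h3 := Nat.add_one_mul_choose_eq ((m+1)*N) (m*N)
    have h4 : ((m+1)*N).choose (m*N) = ((m+1)*N).choose N := by
      have : (m+1)*N - N = m*N := by ring_nf; omega
      rw [← this]
      exact Nat.choose_symm (by nlinarith)
    have h5 : ((m+1)*N + 1).choose (m*N + 1) = (KK m N).choose N := by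
      have : KK m N - N = m*N + 1 := by unfold KK; ring_nf; omega
      rw [show (m+1)*N + 1 = KK m N from rfl, ← this]
      exact Nat.choose_symm (by unfold KK; nlinarith)
    rw [← h4, ← h5]
    simpa [Nat.succ_eq_add_one] using h3
  have h6 : (KK m N) * ((GF m N).card * (m * N + 1)) = (KK m N) * (((m+1)*N).choose N) := by
    rw [h2, ← h1]
    ring
  exact Nat.eq_of_mul_eq_mul_left (by positivity) h6


/-! ### The b-sequence side -/

def SB (m n : ℕ) : Set (ℕ → ℕ) :=
  {b | (∀ i, i = 0 ∨ n < i → b i = 0) ∧ b 1 ≤ m ∧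
       (∀ i, 2 ≤ i → i ≤ n → b i ≤ m + b (i-1))}

section Bside

variable (m n : ℕ)

lemma SB_zero {b : ℕ → ℕ} (hb : b ∈ SB m n) : b 0 = 0 := hb.1 0 (Or.inl rfl)

lemma SB_step {b : ℕ → ℕ} (hb : b ∈ SB m n) :
    ∀ i, 1 ≤ i → i ≤ n → b i ≤ m + b (i-1) := by
  intro i h1 h2
  rcases Nat.lt_or_ge i 2 with h | h
  · have : i = 1 := by omega
    subst this
    simpa [SB_zero m n hb] using hb.2.1
  · exact hb.2.2 i h h2

lemma SB_bound {b : ℕ → ℕ} (hb : b ∈ SB m n) : ∀ i, b i ≤ m * i := by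
  intro i
  induction i with
  | zero => simp [SB_zero m n hb]
  | succ i ih =>
      rcases Nat.lt_or_ge n (i+1) with h | h
      · simp [hb.1 (i+1) (Or.inr h)]
      · have h1 : b (i+1) ≤ m + b i := by
          have := SB_step m n hb (i+1) (by omega) h
          simpa using this
        have e : m * (i+1) = m * i + m := by ring
        omega

/-- the up-step positions (as naturals) -/
def Eb (m : ℕ) (b : ℕ → ℕ) (i : ℕ) : ℕ := (m+1)*i - b i

lemma Eb_mono {b : ℕ → ℕ} (hb : b ∈ SB m n) : StrictMono (Eb m b) := by
  apply strictMono_nat_of_lt_succ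
  intro i
  unfold Eb
  have h2 : b i ≤ m * i := SB_bound m n hb i
  have e0 : m * i ≤ (m+1) * i := Nat.mul_le_mul_right i (Nat.le_succ m)
  have e1 : (m+1)*(i+1) = (m+1)*i + m + 1 := by ring
  rcases Nat.lt_or_ge n (i+1) with h | h
  · have hz : b (i+1) = 0 := hb.1 (i+1) (Or.inr h)
    omega
  · have h1 : b (i+1) ≤ m + b i := by
      have := SB_step m n hb (i+1) (by omega) h
      simpa using this
    omega

lemma Eb_le {b : ℕ → ℕ} (i : ℕ) : Eb m b i ≤ (m+1)*i := Nat.sub_le _ _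

lemma Eb_lt_K {b : ℕ → ℕ} (i : ℕ) (hi : i ≤ n) : Eb m b i < KK m (n+1) := by
  have h1 : Eb m b i ≤ (m+1)*i := Nat.sub_le _ _
  have h2 : (m+1)*i ≤ (m+1)*(n+1) := Nat.mul_le_mul_left (m+1) (by omega)
  unfold KK
  omega

def toA (b : ℕ → ℕ) : Finset (FK m (n+1)) :=
  (range (n+1)).image (fun i => ((Eb m b i : ℕ) : FK m (n+1)))

lemma card_toA {b : ℕ → ℕ} (hb : b ∈ SB m n) : (toA m n b).card = n + 1 := by
  unfold toA
  rw [Finset.card_image_of_injOn, Finset.card_range]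
  intro i hi j hj h
  simp only [Finset.coe_range, Set.mem_Iio] at hi hj
  have hv := congrArg Fin.val h
  rw [Fin.val_cast_of_lt (Eb_lt_K m n i (by omega)),
      Fin.val_cast_of_lt (Eb_lt_K m n j (by omega))] at hv
  exact (Eb_mono m n hb).injective hv

lemma good_toA {b : ℕ → ℕ} (hb : b ∈ SB m n) : GoodW m (n+1) (toA m n b) := by
  intro t ht
  rw [HH_count]
  have key : ((range t).filter (fun j => ((j : ℕ) : FK m (n+1)) ∈ toA m n b)).card
      = ((range (n+1)).filter (fun i => Eb m b i < t)).card := by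
    symm
    apply Finset.card_bij (fun i _ => Eb m b i)
    · intro i hi
      simp only [Finset.mem_filter, Finset.mem_range] at hi ⊢
      refine ⟨hi.2, ?_⟩
      exact Finset.mem_image.2 ⟨i, Finset.mem_range.2 hi.1, rfl⟩
    · intro i hi j hj h
      exact (Eb_mono m n hb).injective h
    · intro j hj
      simp only [Finset.mem_filter, Finset.mem_range] at hj
      obtain ⟨hjt, hjA⟩ := hj
      obtain ⟨i, hi, he⟩ := Finset.mem_image.1 hjA
      rw [Finset.mem_range] at hi
      have hv := congrArg Fin.val he
      rw [Fin.val_cast_of_lt (Eb_lt_K m n i (by omega)),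
          Fin.val_cast_of_lt (by omega : j < KK m (n+1))] at hv
      exact ⟨i, Finset.mem_filter.2 ⟨Finset.mem_range.2 hi, by omega⟩, hv⟩
  rw [key]
  set c := ((range (n+1)).filter (fun i => Eb m b i < t)).card with hc
  have hcle : c ≤ n + 1 := by
    rw [hc]
    calc ((range (n+1)).filter _).card ≤ (range (n+1)).card := Finset.card_filter_le _ _
    _ = n + 1 := Finset.card_range _
  have hnat : t ≤ (m+1) * c := by
    rcases Nat.lt_or_ge c (n+1) with h | h
    · have htE : t ≤ Eb m b c := by
        by_contra hcon
        push_neg at hcon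
        have hsub : range (c+1) ⊆ (range (n+1)).filter (fun i => Eb m b i < t) := by
          intro i hi
          rw [Finset.mem_range] at hi
          refine Finset.mem_filter.2 ⟨Finset.mem_range.2 (by omega), ?_⟩
          have : Eb m b i ≤ Eb m b c := (Eb_mono m n hb).monotone (by omega)
          omega
        have := Finset.card_le_card hsub
        rw [Finset.card_range, ← hc] at this
        omega
      have : Eb m b c ≤ (m+1)*c := Nat.sub_le _ _
      omega
    · have hceq : c = n + 1 := by omega
      rw [hceq]
      unfold KK at ht
      omega
  have : (t : ℤ) ≤ (m+1) * c := by exact_mod_cast hnat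
  omega

/-- inverse map -/
def bOf (A : Finset (FK m (n+1))) : ℕ → ℕ := fun i =>
  if h : i ≤ n ∧ A.card = n + 1 then
    (m+1)*i - (A.orderEmbOfFin h.2 ⟨i, Nat.lt_succ_of_le h.1⟩).val
  else 0

lemma bOf_eq_of_le {A : Finset (FK m (n+1))} (hA : A.card = n + 1) {i : ℕ} (hi : i ≤ n) :
    bOf m n A i = (m+1)*i - (A.orderEmbOfFin hA ⟨i, Nat.lt_succ_of_le hi⟩).val := by
  unfold bOf
  rw [dif_pos ⟨hi, hA⟩]

lemma e_strict {A : Finset (FK m (n+1))} (hA : A.card = n + 1) {k l : Fin (n+1)} (h : k < l) :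
    (A.orderEmbOfFin hA k).val < (A.orderEmbOfFin hA l).val :=
  (A.orderEmbOfFin hA).lt_iff_lt.2 h

lemma e_le {A : Finset (FK m (n+1))} (hA : A.card = n + 1) (hg : GoodW m (n+1) A)
    (i : Fin (n+1)) :
    (A.orderEmbOfFin hA i).val ≤ (m+1) * i.val := by
  have ht : (A.orderEmbOfFin hA i).val < KK m (n+1) := (A.orderEmbOfFin hA i).isLt
  have hgood := hg (A.orderEmbOfFin hA i).val ht
  rw [HH_count] at hgood
  have key : ((range (A.orderEmbOfFin hA i).val).filter
      (fun j => ((j : ℕ) : FK m (n+1)) ∈ A)).card = i.val := by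
    rw [← Fin.card_Iio (b := i)]
    symm
    apply Finset.card_bij (fun k _ => (A.orderEmbOfFin hA k).val)
    · intro k hk
      rw [Finset.mem_Iio] at hk
      refine Finset.mem_filter.2 ⟨Finset.mem_range.2 (e_strict m n hA hk), ?_⟩
      rw [Fin.cast_val_eq_self]
      exact Finset.orderEmbOfFin_mem A hA k
    · intro k hk l hl hkl
      exact (A.orderEmbOfFin hA).injective (Fin.ext hkl)
    · intro j hj
      simp only [Finset.mem_filter, Finset.mem_range] at hj
      obtain ⟨hjt, hjA⟩ := hj
      have hjK : j < KK m (n+1) := by omega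
      have hmem : ((j : ℕ) : FK m (n+1)) ∈ Set.range (A.orderEmbOfFin hA) := by
        rw [Finset.range_orderEmbOfFin]
        exact hjA
      obtain ⟨k, hk⟩ := hmem
      have hkv : (A.orderEmbOfFin hA k).val = j := by
        rw [hk, Fin.val_cast_of_lt hjK]
      have hki : k < i := by
        apply (A.orderEmbOfFin hA).lt_iff_lt.1
        rw [Fin.lt_def]
        omega
      exact ⟨k, Finset.mem_Iio.2 hki, hkv⟩
  rw [key] at hgood
  zify
  linarith

lemma e_zero {A : Finset (FK m (n+1))} (hA : A.card = n + 1) (hg : GoodW m (n+1) A) :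
    (A.orderEmbOfFin hA (0 : Fin (n+1))).val = 0 := by
  have := e_le m n hA hg 0
  simpa using this

lemma bOf_mem_SB {A : Finset (FK m (n+1))} (hA : A.card = n + 1) (hn : 1 ≤ n)
    (hg : GoodW m (n+1) A) : bOf m n A ∈ SB m n := by
  refine ⟨?_, ?_, ?_⟩
  · intro i hi
    rcases hi with rfl | hi
    · rw [bOf_eq_of_le m n hA (by omega)]
      simp
    · unfold bOf
      rw [dif_neg (by omega)]
  · rw [bOf_eq_of_le m n hA hn]
    have h0 : (A.orderEmbOfFin hA (0 : Fin (n+1))).val = 0 := e_zero m n hA hg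
    have h1 : (A.orderEmbOfFin hA (0 : Fin (n+1))).val
        < (A.orderEmbOfFin hA ⟨1, Nat.lt_succ_of_le hn⟩).val := by
      apply e_strict
      rw [Fin.lt_def]
      simp
    omega
  · intro i h2 hin
    have hin' : i - 1 ≤ n := by omega
    rw [bOf_eq_of_le m n hA hin, bOf_eq_of_le m n hA hin']
    have h1 : (A.orderEmbOfFin hA ⟨i-1, Nat.lt_succ_of_le hin'⟩).val
        < (A.orderEmbOfFin hA ⟨i, Nat.lt_succ_of_le hin⟩).val := by
      apply e_strict
      exact Fin.mk_lt_mk.2 (by omega)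
    have hh2 : (A.orderEmbOfFin hA ⟨i-1, Nat.lt_succ_of_le hin'⟩).val ≤ (m+1)*(i-1) :=
      e_le m n hA hg ⟨i-1, Nat.lt_succ_of_le hin'⟩
    have hh3 : (A.orderEmbOfFin hA ⟨i, Nat.lt_succ_of_le hin⟩).val ≤ (m+1)*i :=
      e_le m n hA hg ⟨i, Nat.lt_succ_of_le hin⟩
    have e4 : (m+1)*i = (m+1)*(i-1) + (m+1) := by
      have hi1 : i - 1 + 1 = i := by omega
      calc (m+1)*i = (m+1)*(i-1+1) := by rw [hi1]
      _ = (m+1)*(i-1) + (m+1) := by ring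
    omega

lemma toA_bOf {A : Finset (FK m (n+1))} (hA : A.card = n + 1) (hg : GoodW m (n+1) A) :
    toA m n (bOf m n A) = A := by
  have hEb : ∀ i : ℕ, ∀ hi : i ≤ n,
      Eb m (bOf m n A) i = (A.orderEmbOfFin hA ⟨i, Nat.lt_succ_of_le hi⟩).val := by
    intro i hi
    unfold Eb
    rw [bOf_eq_of_le m n hA hi]
    exact Nat.sub_sub_self (e_le m n hA hg ⟨i, Nat.lt_succ_of_le hi⟩)
  ext x
  unfold toA
  rw [Finset.mem_image]
  constructor
  · rintro ⟨i, hi, rfl⟩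
    rw [Finset.mem_range] at hi
    rw [hEb i (by omega), Fin.cast_val_eq_self]
    exact Finset.orderEmbOfFin_mem A hA _
  · intro hx
    have hmem : x ∈ Set.range (A.orderEmbOfFin hA) := by
      rw [Finset.range_orderEmbOfFin]; exact hx
    obtain ⟨k, hk⟩ := hmem
    refine ⟨k.val, Finset.mem_range.2 k.isLt, ?_⟩
    have hkn : k.val ≤ n := by omega
    rw [hEb k.val hkn, Fin.cast_val_eq_self, ← hk]

lemma bOf_toA {b : ℕ → ℕ} (hb : b ∈ SB m n) (hcard : (toA m n b).card = n + 1) :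
    bOf m n (toA m n b) = b := by
  have hf1 : ∀ k : Fin (n+1), ((Eb m b k.val : ℕ) : FK m (n+1)) ∈ toA m n b := by
    intro k
    exact Finset.mem_image.2 ⟨k.val, Finset.mem_range.2 k.isLt, rfl⟩
  have hf2 : StrictMono (fun k : Fin (n+1) => ((Eb m b k.val : ℕ) : FK m (n+1))) := by
    intro k l hkl
    have h1 : Eb m b k.val < Eb m b l.val := Eb_mono m n hb (by exact hkl)
    rw [Fin.lt_def, Fin.val_cast_of_lt (Eb_lt_K m n _ (by omega)),
        Fin.val_cast_of_lt (Eb_lt_K m n _ (by omega))]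
    exact h1
  have huniq := Finset.orderEmbOfFin_unique hcard hf1 hf2
  funext i
  rcases Nat.lt_or_ge n i with h | h
  · unfold bOf
    rw [dif_neg (by omega)]
    exact (hb.1 i (Or.inr h)).symm
  · rw [bOf_eq_of_le m n hcard h]
    have he : ((toA m n b).orderEmbOfFin hcard ⟨i, Nat.lt_succ_of_le h⟩).val = Eb m b i := by
      rw [← huniq]
      exact Fin.val_cast_of_lt (Eb_lt_K m n _ h)
    rw [he]
    unfold Eb
    have hble : b i ≤ (m+1)*i := by
      have h1 : b i ≤ m * i := SB_bound m n hb i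
      have h2 : m * i ≤ (m+1)*i := Nat.mul_le_mul_right i (Nat.le_succ m)
      omega
    omega

end Bside

lemma SB_ncard (m n : ℕ) (hn : 1 ≤ n) : (SB m n).ncard = (GF m (n+1)).card := by
  have e : SB m n ≃ {A // A ∈ GF m (n+1)} :=
    { toFun := fun b => ⟨toA m n b.1,
        (mem_GF _ _ _).2 ⟨card_toA m n b.2, good_toA m n b.2⟩⟩
      invFun := fun A => ⟨bOf m n A.1,
        bOf_mem_SB m n ((mem_GF _ _ _).1 A.2).1 hn ((mem_GF _ _ _).1 A.2).2⟩
      left_inv := fun b => Subtype.ext (bOf_toA m n b.2 (card_toA m n b.2))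
      right_inv := fun A => Subtype.ext
        (toA_bOf m n ((mem_GF _ _ _).1 A.2).1 ((mem_GF _ _ _).1 A.2).2) }
  rw [← Nat.card_coe_set_eq, Nat.card_congr e, Nat.card_eq_fintype_card,
      Fintype.card_coe]

end FussAux

theorem stmt3 (r n : ℕ) (hn : 1 ≤ n) :
    ({b : ℕ → ℕ |
        (∀ i, i = 0 ∨ n < i → b i = 0) ∧
        b 1 ≤ r + 1 ∧
        (∀ i, 2 ≤ i → i ≤ n → b i ≤ r + 1 + b (i - 1))}.ncard : ℚ)
      = (Nat.choose ((r + 2) * (n + 1)) (n + 1) : ℚ) / ((r + 1) * (n + 1) + 1) := by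
  have hset : {b : ℕ → ℕ |
        (∀ i, i = 0 ∨ n < i → b i = 0) ∧
        b 1 ≤ r + 1 ∧
        (∀ i, 2 ≤ i → i ≤ n → b i ≤ r + 1 + b (i - 1))} = FussAux.SB (r+1) n := rfl
  rw [hset, FussAux.SB_ncard (r+1) n hn]
  have h2 := FussAux.card_GF (r+1) (n+1)
  have e : ((r+1)+1)*(n+1) = (r+2)*(n+1) := by ring
  rw [e] at h2
  rw [eq_div_iff (by positivity)]
  exact_mod_cast h2
end

section
/- There is a bijection between (A) triangular arrays (a_{i,j}) of nonnegative integers with rows satisfying a_{n,i} ≤ a_{n-1,i} ≤ ... ≤ a_{i+1,i} ≤ binomial(i+1, 2) + i*m − sum_{k=1}^{i-1} a_{i,k} for all i ∈ [n-1], and (B) triangular arrays (b_{i,j}) of nonnegative integers satisfying b_{n,i} + b_{n-1,i} + ... + b_{i+1,i} ≤ m + i + sum_{k=1}^{i-1} b_{i,k} for all i ∈ [n-1]. -/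
open Finset

namespace Stmt6

/-- The row bound `C(i+1,2) + i*m`. -/
def Abd (m i : ℕ) : ℕ := Nat.choose (i + 1) 2 + i * m

/-- Prefix sum of row `i`. -/
def S (f : ℕ → ℕ → ℕ) (i : ℕ) : ℕ := ∑ k ∈ Icc 1 (i - 1), f i k

/-- Extension of `a` by its diagonal values. -/
def ahat (m : ℕ) (a : ℕ → ℕ → ℕ) (j i : ℕ) : ℕ :=
  if j ≤ i then Abd m i - S a i else a j i

def D (m : ℕ) (b : ℕ → ℕ → ℕ) (i : ℕ) : ℕ := m + i + S b i

def T (b : ℕ → ℕ → ℕ) (i j : ℕ) : ℕ := ∑ l ∈ Icc (i + 1) j, b l i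

/-- The map from (A) to (B). -/
def Psi (m n : ℕ) (a : ℕ → ℕ → ℕ) (j i : ℕ) : ℕ :=
  if 1 ≤ i ∧ i + 1 ≤ j ∧ j ≤ n then ahat m a (j - 1) i - ahat m a j i else 0

/-- The map from (B) to (A). -/
def Phi (m n : ℕ) (b : ℕ → ℕ → ℕ) (j i : ℕ) : ℕ :=
  if 1 ≤ i ∧ i + 1 ≤ j ∧ j ≤ n then D m b i - T b i j else 0

lemma Abd_succ (m i : ℕ) : Abd m (i + 1) = m + (i + 1) + Abd m i := by
  simp [Abd, Nat.choose_succ_succ, Nat.choose_one_right]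
  ring

section Aside

variable (m n : ℕ) (a : ℕ → ℕ → ℕ)
variable (ha : ∀ i, 1 ≤ i → i ≤ n - 1 →
    ((∀ l, i + 1 ≤ l → l ≤ n - 1 → a (l + 1) i ≤ a l i) ∧
     a (i + 1) i + S a i ≤ Abd m i))

include ha

lemma mono (i : ℕ) (hi : 1 ≤ i) (hin : i ≤ n - 1) :
    ∀ j j', i ≤ j → j ≤ j' → j' ≤ n → ahat m a j' i ≤ ahat m a j i := by
  have hstep : ∀ l, i ≤ l → l ≤ n - 1 → ahat m a (l + 1) i ≤ ahat m a l i := by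
    intro l hl hln
    rcases eq_or_lt_of_le hl with rfl | hl'
    · have h := (ha i hi hin).2
      simp only [ahat, if_pos (le_refl i), if_neg (by omega : ¬ i + 1 ≤ i)]
      omega
    · have h := (ha i hi hin).1 l hl' hln
      simp only [ahat, if_neg (by omega : ¬ l + 1 ≤ i), if_neg (by omega : ¬ l ≤ i)]
      exact h
  intro j j' hj hjj' hj'
  obtain ⟨d, rfl⟩ := Nat.exists_eq_add_of_le hjj'
  clear hjj'
  induction d with
  | zero => simp
  | succ d ih =>
    have h1 : ahat m a (j + d + 1) i ≤ ahat m a (j + d) i :=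
      hstep (j + d) (by omega) (by omega)
    have h2 := ih (by omega)
    calc ahat m a (j + (d + 1)) i = ahat m a (j + d + 1) i := by rw [Nat.add_succ]
    _ ≤ ahat m a (j + d) i := h1
    _ ≤ ahat m a j i := h2

lemma telescope (i : ℕ) (hi : 1 ≤ i) (hin : i ≤ n - 1) :
    ∀ j, i ≤ j → j ≤ n →
      ∑ l ∈ Icc (i + 1) j, Psi m n a l i = ahat m a i i - ahat m a j i := by
  intro j
  induction j with
  | zero => intro h1 _; omega
  | succ j ih =>
    intro hij hjn
    rcases eq_or_lt_of_le hij with heq | hlt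
    · rw [← heq, Finset.Icc_eq_empty (by omega), Finset.sum_empty, Nat.sub_self]
    · have hij' : i ≤ j := by omega
      rw [Finset.sum_Icc_succ_top (by omega : i + 1 ≤ j + 1), ih hij' (by omega)]
      have hPsi : Psi m n a (j + 1) i = ahat m a j i - ahat m a (j + 1) i := by
        rw [Psi, if_pos ⟨hi, by omega, hjn⟩]
        simp only [Nat.add_sub_cancel]
      have h1 : ahat m a (j + 1) i ≤ ahat m a j i :=
        mono m n a ha i hi hin j (j + 1) hij' (by omega) hjn
      have h2 : ahat m a j i ≤ ahat m a i i :=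
        mono m n a ha i hi hin i j (le_refl i) hij' (by omega)
      rw [hPsi]
      omega

lemma sumrow (r : ℕ) (hr : r ≤ n - 1) :
    ∑ k ∈ Icc 1 r, ahat m a r k = Abd m r := by
  cases r with
  | zero => simp [Abd]
  | succ s =>
    rw [Finset.sum_Icc_succ_top (by omega : 1 ≤ s + 1)]
    have h1 : ∀ k ∈ Icc 1 s, ahat m a (s + 1) k = a (s + 1) k := by
      intro k hk
      simp only [mem_Icc] at hk
      rw [ahat, if_neg (by omega)]
    rw [Finset.sum_congr rfl h1]
    have h2 : ahat m a (s + 1) (s + 1) = Abd m (s + 1) - S a (s + 1) := by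
      rw [ahat, if_pos (le_refl (s + 1))]
    have h3 : S a (s + 1) = ∑ k ∈ Icc 1 s, a (s + 1) k := rfl
    have h4 := (ha (s + 1) (by omega) hr).2
    have h5 : ∑ k ∈ Icc 1 s, a (s + 1) k = Finset.sum (Icc 1 s) (a (s + 1)) := rfl
    omega

lemma DPsi (i : ℕ) (hi : 1 ≤ i) (hin : i ≤ n - 1) :
    D m (Psi m n a) i + S a i = Abd m i := by
  obtain ⟨s, rfl⟩ : ∃ s, i = s + 1 := ⟨i - 1, by omega⟩
  have hpt : ∀ k ∈ Icc 1 s, Psi m n a (s + 1) k = ahat m a s k - ahat m a (s + 1) k := by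
    intro k hk
    simp only [mem_Icc] at hk
    rw [Psi, if_pos ⟨hk.1, by omega, by omega⟩]
    simp only [Nat.add_sub_cancel]
  have hle : ∀ k ∈ Icc 1 s, ahat m a (s + 1) k ≤ ahat m a s k := by
    intro k hk
    simp only [mem_Icc] at hk
    exact mono m n a ha k hk.1 (by omega) s (s + 1) (by omega) (by omega) (by omega)
  have hsub : S (Psi m n a) (s + 1)
      = ∑ k ∈ Icc 1 s, ahat m a s k - ∑ k ∈ Icc 1 s, ahat m a (s + 1) k := by
    show ∑ k ∈ Icc 1 s, Psi m n a (s + 1) k = _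
    rw [Finset.sum_congr rfl hpt, Finset.sum_tsub_distrib _ hle]
  have hrow : ∑ k ∈ Icc 1 s, ahat m a s k = Abd m s := sumrow m n a ha s (by omega)
  have hSa : ∑ k ∈ Icc 1 s, ahat m a (s + 1) k = S a (s + 1) := by
    apply Finset.sum_congr rfl
    intro k hk
    simp only [mem_Icc] at hk
    rw [ahat, if_neg (by omega)]
  have hS_le : S a (s + 1) ≤ Abd m s := by
    rw [← hSa, ← hrow]
    exact Finset.sum_le_sum hle
  have hA := Abd_succ m s
  have hD : D m (Psi m n a) (s + 1) = m + (s + 1) + S (Psi m n a) (s + 1) := rfl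
  omega

lemma PsiMem :
    (∀ i j, ¬(1 ≤ j ∧ j + 1 ≤ i ∧ i ≤ n) → Psi m n a i j = 0) ∧
    (∀ i, 1 ≤ i → i ≤ n - 1 →
      (∑ l ∈ Icc (i + 1) n, Psi m n a l i) ≤
        m + i + ∑ k ∈ Icc 1 (i - 1), Psi m n a i k) := by
  constructor
  · intro i j h
    rw [Psi, if_neg h]
  · intro i hi hin
    have ht := telescope m n a ha i hi hin n (by omega) (le_refl n)
    have hD := DPsi m n a ha i hi hin
    have hS := (ha i hi hin).2
    have hii : ahat m a i i = Abd m i - S a i := by rw [ahat, if_pos (le_refl i)]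
    have hd : m + i + ∑ k ∈ Icc 1 (i - 1), Psi m n a i k = D m (Psi m n a) i := rfl
    rw [ht, hd]
    omega

end Aside

section Bside

variable (m n : ℕ) (b : ℕ → ℕ → ℕ)

lemma Tmono (i j j' : ℕ) (h : j ≤ j') : T b i j ≤ T b i j' :=
  Finset.sum_le_sum_of_subset (Finset.Icc_subset_Icc_right h)

variable (hb : ∀ i, 1 ≤ i → i ≤ n - 1 → T b i n ≤ D m b i)

include hb

lemma Qlem : ∀ i, 1 ≤ i → i ≤ n - 1 → S (Phi m n b) i + D m b i = Abd m i := by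
  intro i
  induction i with
  | zero => intro h; exact absurd h (by omega)
  | succ i ih =>
    intro _ hin
    rcases Nat.eq_zero_or_pos i with h0 | hi
    · subst h0
      show S (Phi m n b) 1 + D m b 1 = Abd m 1
      have h1 : S (Phi m n b) 1 = 0 := by simp [S]
      have h2 : S b 1 = 0 := by simp [S]
      have h3 : Abd m 1 = 1 + m := by simp [Abd]
      have h4 : D m b 1 = m + 1 + S b 1 := rfl
      omega
    · have IH := ih hi (by omega)
      obtain ⟨s, rfl⟩ : ∃ s, i = s + 1 := ⟨i - 1, by omega⟩
      show S (Phi m n b) (s + 2) + D m b (s + 2) = Abd m (s + 2)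
      have hTD : ∀ k ∈ Icc 1 (s + 1), T b k (s + 2) ≤ D m b k := by
        intro k hk
        simp only [mem_Icc] at hk
        exact le_trans (Tmono b k (s + 2) n (by omega)) (hb k hk.1 (by omega))
      have key : ∀ k ∈ Icc 1 (s + 1),
          Phi m n b (s + 2) k + b (s + 2) k = D m b k - T b k (s + 1) := by
        intro k hk
        simp only [mem_Icc] at hk
        have h1 : Phi m n b (s + 2) k = D m b k - T b k (s + 2) := by
          rw [Phi, if_pos ⟨hk.1, by omega, by omega⟩]
        have h2 : T b k (s + 2) = T b k (s + 1) + b (s + 2) k := by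
          rw [T, T, Finset.sum_Icc_succ_top (by omega : k + 1 ≤ s + 2)]
        have h3 := hTD k (by simp only [mem_Icc]; omega)
        have h4 : T b k (s + 1) ≤ T b k (s + 2) := Tmono b k _ _ (by omega)
        omega
      have hsum1 : S (Phi m n b) (s + 2) = ∑ k ∈ Icc 1 (s + 1), Phi m n b (s + 2) k := rfl
      have hsum2 : D m b (s + 2) = m + (s + 2) + ∑ k ∈ Icc 1 (s + 1), b (s + 2) k := rfl
      have hcomb : (∑ k ∈ Icc 1 (s + 1), Phi m n b (s + 2) k)
            + ∑ k ∈ Icc 1 (s + 1), b (s + 2) k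
          = ∑ k ∈ Icc 1 (s + 1), (D m b k - T b k (s + 1)) := by
        rw [← Finset.sum_add_distrib]
        exact Finset.sum_congr rfl key
      have hsplit : ∑ k ∈ Icc 1 (s + 1), (D m b k - T b k (s + 1))
          = (∑ k ∈ Icc 1 s, (D m b k - T b k (s + 1))) + (D m b (s + 1) - T b (s + 1) (s + 1)) :=
        Finset.sum_Icc_succ_top (by omega) _
      have hTss : T b (s + 1) (s + 1) = 0 := by
        rw [T, Finset.Icc_eq_empty (by omega), Finset.sum_empty]
      have hback : S (Phi m n b) (s + 1) = ∑ k ∈ Icc 1 s, (D m b k - T b k (s + 1)) := by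
        apply Finset.sum_congr rfl
        intro k hk
        simp only [mem_Icc] at hk
        rw [Phi, if_pos ⟨hk.1, by omega, by omega⟩]
      have hA : Abd m (s + 2) = m + (s + 2) + Abd m (s + 1) := Abd_succ m (s + 1)
      omega

lemma PhiMem :
    (∀ i j, ¬(1 ≤ j ∧ j + 1 ≤ i ∧ i ≤ n) → Phi m n b i j = 0) ∧
    (∀ i, 1 ≤ i → i ≤ n - 1 →
      ((∀ l, i + 1 ≤ l → l ≤ n - 1 → Phi m n b (l + 1) i ≤ Phi m n b l i) ∧
       Phi m n b (i + 1) i + ∑ k ∈ Icc 1 (i - 1), Phi m n b i k ≤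
         Nat.choose (i + 1) 2 + i * m)) := by
  constructor
  · intro i j h
    rw [Phi, if_neg h]
  · intro i hi hin
    refine ⟨?_, ?_⟩
    · intro l hl hln
      rw [Phi, if_pos ⟨hi, by omega, by omega⟩, Phi, if_pos ⟨hi, hl, by omega⟩]
      exact Nat.sub_le_sub_left (Tmono b i l (l + 1) (by omega)) _
    · have hQ := Qlem m n b hb i hi hin
      have h1 : Phi m n b (i + 1) i = D m b i - T b i (i + 1) := by
        rw [Phi, if_pos ⟨hi, le_refl (i + 1), by omega⟩]
      have h2 : ∑ k ∈ Icc 1 (i - 1), Phi m n b i k = S (Phi m n b) i := rfl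
      have h3 : Nat.choose (i + 1) 2 + i * m = Abd m i := rfl
      omega

lemma PsiPhi (hb0 : ∀ i j, ¬(1 ≤ j ∧ j + 1 ≤ i ∧ i ≤ n) → b i j = 0) :
    Psi m n (Phi m n b) = b := by
  funext j i
  by_cases h : 1 ≤ i ∧ i + 1 ≤ j ∧ j ≤ n
  · obtain ⟨h1, h2, h3⟩ := h
    obtain ⟨t, rfl⟩ : ∃ t, j = t + 1 := ⟨j - 1, by omega⟩
    have hin : i ≤ n - 1 := by omega
    have hQ := Qlem m n b hb i h1 hin
    have hkey : ∀ l, i ≤ l → l ≤ n → ahat m (Phi m n b) l i = D m b i - T b i l := by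
      intro l hl hln
      rcases eq_or_lt_of_le hl with rfl | hlt
      · rw [ahat, if_pos (le_refl i)]
        have hT : T b i i = 0 := by
          rw [T, Finset.Icc_eq_empty (by omega), Finset.sum_empty]
        omega
      · rw [ahat, if_neg (by omega), Phi, if_pos ⟨h1, by omega, hln⟩]
    rw [Psi, if_pos ⟨h1, h2, h3⟩]
    rw [show t + 1 - 1 = t from rfl]
    rw [hkey t (by omega) (by omega), hkey (t + 1) (by omega) h3]
    have hTj : T b i (t + 1) = T b i t + b (t + 1) i := by
      rw [T, T, Finset.sum_Icc_succ_top (by omega : i + 1 ≤ t + 1)]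
    have hTD : T b i (t + 1) ≤ D m b i :=
      le_trans (Tmono b i (t + 1) n h3) (hb i h1 hin)
    have hTm : T b i t ≤ T b i (t + 1) := Tmono b i t (t + 1) (by omega)
    omega
  · rw [Psi, if_neg h]
    exact (hb0 j i h).symm

end Bside

lemma PhiPsi (m n : ℕ) (a : ℕ → ℕ → ℕ)
    (ha0 : ∀ i j, ¬(1 ≤ j ∧ j + 1 ≤ i ∧ i ≤ n) → a i j = 0)
    (ha : ∀ i, 1 ≤ i → i ≤ n - 1 →
      ((∀ l, i + 1 ≤ l → l ≤ n - 1 → a (l + 1) i ≤ a l i) ∧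
       a (i + 1) i + S a i ≤ Abd m i)) :
    Phi m n (Psi m n a) = a := by
  funext j i
  by_cases h : 1 ≤ i ∧ i + 1 ≤ j ∧ j ≤ n
  · obtain ⟨h1, h2, h3⟩ := h
    have hin : i ≤ n - 1 := by omega
    rw [Phi, if_pos ⟨h1, h2, h3⟩]
    have hT : T (Psi m n a) i j = ahat m a i i - ahat m a j i :=
      telescope m n a ha i h1 hin j (by omega) h3
    have hD := DPsi m n a ha i h1 hin
    have hS := (ha i h1 hin).2
    have hii : ahat m a i i = Abd m i - S a i := by rw [ahat, if_pos (le_refl i)]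
    have hji : ahat m a j i = a j i := by rw [ahat, if_neg (by omega)]
    have hmono : ahat m a j i ≤ ahat m a i i :=
      mono m n a ha i h1 hin i j (le_refl i) (by omega) h3
    omega
  · rw [Phi, if_neg h]
    exact (ha0 j i h).symm

end Stmt6

theorem stmt6 (m n : ℕ) (hn : 2 ≤ n) :
    Nonempty (
      ({a : ℕ → ℕ → ℕ |
        (∀ i j, ¬(1 ≤ j ∧ j + 1 ≤ i ∧ i ≤ n) → a i j = 0) ∧
        (∀ i, 1 ≤ i → i ≤ n - 1 →
          ((∀ l, i + 1 ≤ l → l ≤ n - 1 → a (l + 1) i ≤ a l i) ∧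
           a (i + 1) i + ∑ k ∈ Finset.Icc 1 (i - 1), a i k ≤
             Nat.choose (i + 1) 2 + i * m))} : Set (ℕ → ℕ → ℕ)) ≃
      {b : ℕ → ℕ → ℕ |
        (∀ i j, ¬(1 ≤ j ∧ j + 1 ≤ i ∧ i ≤ n) → b i j = 0) ∧
        (∀ i, 1 ≤ i → i ≤ n - 1 →
          (∑ l ∈ Finset.Icc (i + 1) n, b l i) ≤
            m + i + ∑ k ∈ Finset.Icc 1 (i - 1), b i k)}) := by
  refine ⟨{
    toFun := fun a => ⟨Stmt6.Psi m n a.1, Stmt6.PsiMem m n a.1 a.2.2⟩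
    invFun := fun b => ⟨Stmt6.Phi m n b.1, Stmt6.PhiMem m n b.1 b.2.2⟩
    left_inv := fun a => Subtype.ext (Stmt6.PhiPsi m n a.1 a.2.1 a.2.2)
    right_inv := fun b => Subtype.ext (Stmt6.PsiPhi m n b.1 b.2.2 b.2.1) }⟩
end

section
/- Fix n ≥ 1 and 1 ≤ k ≤ n. The triangular arrays (b_{i,j})_{i>j} of nonnegative integers satisfying b_{n,i}+...+b_{i+1,i} ≤ n_i + sum_{k'=1}^{i-1} b_{i,k'} for all i ∈ [n-1], where a fixed (k-1)-subset J of the variables b_{n,j} (j ∈ [n-1]) is required to be 0, n_i = i for i ∈ J, and n_i = i−1 otherwise, are in bijection (summing over all choices of J) with triangular arrays (b̃_{i,j})_{i>j} of nonnegative integers satisfying b̃_{n,i}+...+b̃_{i+1,i} ≤ i + sum_{k'=1}^{i-1} b̃_{i,k'} for all i ∈ [n-1] such that exactly k-1 of these n-1 inequalities hold with equality. -/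
open Finset

/-- Forward map: fill in the entries `b n j`, `j ∈ J`, to force equality. -/
def stmt11F (n : ℕ) (J : Finset ℕ) (b : ℕ → ℕ → ℕ) : ℕ → ℕ → ℕ := fun i j =>
  if i = n ∧ j ∈ J then
    j + (∑ k' ∈ Finset.Icc 1 (j - 1), b j k') - ∑ l ∈ Finset.Icc (j + 1) (n - 1), b l j
  else b i j

/-- Backward map: zero out the entries `b n j`, `j ∈ E`. -/
def stmt11G (n : ℕ) (E : Finset ℕ) (b : ℕ → ℕ → ℕ) : ℕ → ℕ → ℕ := fun i j =>
  if i = n ∧ j ∈ E then 0 else b i j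

lemma stmt11_split (n : ℕ) (hn : 1 ≤ n) {i : ℕ} (hi : i ≤ n - 1) (f : ℕ → ℕ) :
    ∑ l ∈ Finset.Icc (i + 1) n, f l = (∑ l ∈ Finset.Icc (i + 1) (n - 1), f l) + f n := by
  obtain ⟨m, rfl⟩ : ∃ m, n = m + 1 := ⟨n - 1, by omega⟩
  simp only [Nat.add_sub_cancel] at hi ⊢
  rw [Finset.sum_Icc_succ_top (by omega)]

lemma stmt11F_row (n : ℕ) (J : Finset ℕ) (b : ℕ → ℕ → ℕ) {i : ℕ} (hi : i ≠ n) :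
    ∑ k' ∈ Finset.Icc 1 (i - 1), stmt11F n J b i k'
      = ∑ k' ∈ Finset.Icc 1 (i - 1), b i k' := by
  refine Finset.sum_congr rfl fun x _ => ?_
  simp [stmt11F, hi]

lemma stmt11F_col (n : ℕ) (hn : 1 ≤ n) (J : Finset ℕ) (b : ℕ → ℕ → ℕ) (i : ℕ) :
    ∑ l ∈ Finset.Icc (i + 1) (n - 1), stmt11F n J b l i
      = ∑ l ∈ Finset.Icc (i + 1) (n - 1), b l i := by
  refine Finset.sum_congr rfl fun x hx => ?_
  rw [Finset.mem_Icc] at hx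
  have : x ≠ n := by omega
  simp [stmt11F, this]

lemma stmt11G_row (n : ℕ) (E : Finset ℕ) (b : ℕ → ℕ → ℕ) {i : ℕ} (hi : i ≠ n) :
    ∑ k' ∈ Finset.Icc 1 (i - 1), stmt11G n E b i k'
      = ∑ k' ∈ Finset.Icc 1 (i - 1), b i k' := by
  refine Finset.sum_congr rfl fun x _ => ?_
  simp [stmt11G, hi]

lemma stmt11G_col (n : ℕ) (hn : 1 ≤ n) (E : Finset ℕ) (b : ℕ → ℕ → ℕ) (i : ℕ) :
    ∑ l ∈ Finset.Icc (i + 1) (n - 1), stmt11G n E b l i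
      = ∑ l ∈ Finset.Icc (i + 1) (n - 1), b l i := by
  refine Finset.sum_congr rfl fun x hx => ?_
  rw [Finset.mem_Icc] at hx
  have : x ≠ n := by omega
  simp [stmt11G, this]

/-- Fix `n ≥ 1` and `1 ≤ k ≤ n`.  Pairs `(J, b)` where `J` is a
`(k-1)`-subset of `[n-1]` and `b` is a triangular array of nonnegative integers
(entries for `1 ≤ j ≤ n-1`, `j+1 ≤ i ≤ n`) with `b n j = 0` for `j ∈ J` and
`b_{n,i}+⋯+b_{i+1,i} ≤ n_i + ∑_{k'=1}^{i-1} b_{i,k'}` for all `i ∈ [n-1]`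
(where `n_i = i` if `i ∈ J` and `n_i = i−1` otherwise) are in bijection with
triangular arrays `b̃` satisfying `b̃_{n,i}+⋯+b̃_{i+1,i} ≤ i + ∑_{k'=1}^{i-1} b̃_{i,k'}`
for all `i ∈ [n-1]` with exactly `k-1` of these inequalities holding with equality. -/
theorem stmt11 (n k : ℕ) (hk1 : 1 ≤ k) (hkn : k ≤ n) :
    Nonempty (
      ({p : Finset ℕ × (ℕ → ℕ → ℕ) |
        p.1 ⊆ Finset.Icc 1 (n - 1) ∧ p.1.card = k - 1 ∧
        (∀ i j, ¬(1 ≤ j ∧ j + 1 ≤ i ∧ i ≤ n) → p.2 i j = 0) ∧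
        (∀ j ∈ p.1, p.2 n j = 0) ∧
        (∀ i, 1 ≤ i → i ≤ n - 1 →
          (∑ l ∈ Finset.Icc (i + 1) n, p.2 l i) ≤
            (if i ∈ p.1 then i else i - 1) +
              ∑ k' ∈ Finset.Icc 1 (i - 1), p.2 i k')} :
        Set (Finset ℕ × (ℕ → ℕ → ℕ))) ≃
      {b : ℕ → ℕ → ℕ |
        (∀ i j, ¬(1 ≤ j ∧ j + 1 ≤ i ∧ i ≤ n) → b i j = 0) ∧
        (∀ i, 1 ≤ i → i ≤ n - 1 →
          (∑ l ∈ Finset.Icc (i + 1) n, b l i) ≤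
            i + ∑ k' ∈ Finset.Icc 1 (i - 1), b i k') ∧
        ((Finset.Icc 1 (n - 1)).filter (fun i =>
            (∑ l ∈ Finset.Icc (i + 1) n, b l i) =
              i + ∑ k' ∈ Finset.Icc 1 (i - 1), b i k')).card = k - 1}) := by
  have hn : 1 ≤ n := le_trans hk1 hkn
  -- key fact for the forward map
  have keyF : ∀ p : Finset ℕ × (ℕ → ℕ → ℕ), p ∈
      {p : Finset ℕ × (ℕ → ℕ → ℕ) |
        p.1 ⊆ Finset.Icc 1 (n - 1) ∧ p.1.card = k - 1 ∧
        (∀ i j, ¬(1 ≤ j ∧ j + 1 ≤ i ∧ i ≤ n) → p.2 i j = 0) ∧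
        (∀ j ∈ p.1, p.2 n j = 0) ∧
        (∀ i, 1 ≤ i → i ≤ n - 1 →
          (∑ l ∈ Finset.Icc (i + 1) n, p.2 l i) ≤
            (if i ∈ p.1 then i else i - 1) +
              ∑ k' ∈ Finset.Icc 1 (i - 1), p.2 i k')} →
      ∀ i, 1 ≤ i → i ≤ n - 1 →
        (∑ l ∈ Finset.Icc (i + 1) n, stmt11F n p.1 p.2 l i) ≤
          i + ∑ k' ∈ Finset.Icc 1 (i - 1), stmt11F n p.1 p.2 i k' ∧
        (((∑ l ∈ Finset.Icc (i + 1) n, stmt11F n p.1 p.2 l i) =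
          i + ∑ k' ∈ Finset.Icc 1 (i - 1), stmt11F n p.1 p.2 i k') ↔ i ∈ p.1) := by
    rintro ⟨J, b⟩ ⟨hJ, hcard, hsupp, hzero, hineq⟩ i hi1 hi2
    dsimp only at hJ hcard hsupp hzero hineq ⊢
    have hin : i ≠ n := by omega
    rw [stmt11_split n hn hi2, stmt11F_col n hn, stmt11F_row n J b hin]
    have hb := hineq i hi1 hi2
    rw [stmt11_split n hn hi2] at hb
    by_cases hiJ : i ∈ J
    · have h0 : b n i = 0 := hzero i hiJ
      rw [if_pos hiJ, h0] at hb
      have hle : (∑ l ∈ Finset.Icc (i + 1) (n - 1), b l i)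
          ≤ i + ∑ k' ∈ Finset.Icc 1 (i - 1), b i k' := by omega
      have hF : stmt11F n J b n i =
          i + (∑ k' ∈ Finset.Icc 1 (i - 1), b i k')
            - ∑ l ∈ Finset.Icc (i + 1) (n - 1), b l i := by
        simp [stmt11F, hiJ]
      rw [hF]
      constructor
      · omega
      · simp [hiJ]; omega
    · have hF : stmt11F n J b n i = b n i := by simp [stmt11F, hiJ]
      rw [if_neg hiJ] at hb
      rw [hF]
      constructor
      · omega
      · simp [hiJ]; omega
  refine ⟨{ toFun := fun p => ⟨stmt11F n p.1.1 p.1.2, ?_⟩,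
            invFun := fun b => ⟨⟨(Finset.Icc 1 (n - 1)).filter (fun i =>
              (∑ l ∈ Finset.Icc (i + 1) n, b.1 l i) =
                i + ∑ k' ∈ Finset.Icc 1 (i - 1), b.1 i k'), stmt11G n
                ((Finset.Icc 1 (n - 1)).filter (fun i =>
              (∑ l ∈ Finset.Icc (i + 1) n, b.1 l i) =
                i + ∑ k' ∈ Finset.Icc 1 (i - 1), b.1 i k')) b.1⟩, ?_⟩,
            left_inv := ?_, right_inv := ?_ }⟩
  · -- membership of forward image
    obtain ⟨p, hp⟩ := p
    obtain ⟨hJ, hcard, hsupp, hzero, hineq⟩ := hp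
    refine ⟨?_, fun i hi1 hi2 => (keyF p ⟨hJ, hcard, hsupp, hzero, hineq⟩ i hi1 hi2).1, ?_⟩
    · intro i j hij
      by_cases h : i = n ∧ j ∈ p.1
      · exfalso
        obtain ⟨rfl, hj⟩ := h
        have := Finset.mem_Icc.mp (hJ hj)
        omega
      · simpa [stmt11F, h] using hsupp i j hij
    · have : (Finset.Icc 1 (n - 1)).filter (fun i =>
          (∑ l ∈ Finset.Icc (i + 1) n, stmt11F n p.1 p.2 l i) =
            i + ∑ k' ∈ Finset.Icc 1 (i - 1), stmt11F n p.1 p.2 i k') = p.1 := by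
        ext x
        simp only [Finset.mem_filter, Finset.mem_Icc]
        constructor
        · rintro ⟨⟨hx1, hx2⟩, hx3⟩
          exact ((keyF p ⟨hJ, hcard, hsupp, hzero, hineq⟩ x hx1 hx2).2).mp hx3
        · intro hx
          have hm := Finset.mem_Icc.mp (hJ hx)
          exact ⟨hm, ((keyF p ⟨hJ, hcard, hsupp, hzero, hineq⟩ x hm.1 hm.2).2).mpr hx⟩
      rw [this]; exact hcard
  · -- membership of backward image
    obtain ⟨b, hb⟩ := b
    obtain ⟨hsupp, hineq, hcard⟩ := hb
    set E := (Finset.Icc 1 (n - 1)).filter (fun i =>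
        (∑ l ∈ Finset.Icc (i + 1) n, b l i) =
          i + ∑ k' ∈ Finset.Icc 1 (i - 1), b i k') with hE
    refine ⟨Finset.filter_subset _ _, hcard, ?_, ?_, ?_⟩
    · intro i j hij
      by_cases h : i = n ∧ j ∈ E
      · exact if_pos h
      · show (if i = n ∧ j ∈ E then 0 else b i j) = 0
        rw [if_neg h]; exact hsupp i j hij
    · intro j hj
      show (if n = n ∧ j ∈ E then 0 else b n j) = 0
      rw [if_pos ⟨rfl, hj⟩]
    · intro i hi1 hi2
      show (∑ l ∈ Finset.Icc (i + 1) n, stmt11G n E b l i) ≤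
        (if i ∈ E then i else i - 1) + ∑ k' ∈ Finset.Icc 1 (i - 1), stmt11G n E b i k'
      have hin : i ≠ n := by omega
      rw [stmt11_split n hn hi2, stmt11G_col n hn, stmt11G_row n E b hin]
      have hb := hineq i hi1 hi2
      rw [stmt11_split n hn hi2] at hb
      have hG : stmt11G n E b n i = if i ∈ E then 0 else b n i := by
        by_cases hiE : i ∈ E
        · show (if n = n ∧ i ∈ E then 0 else b n i) = _
          rw [if_pos ⟨rfl, hiE⟩, if_pos hiE]
        · show (if n = n ∧ i ∈ E then 0 else b n i) = _
          rw [if_neg (by tauto), if_neg hiE]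
      rw [hG]
      by_cases hiE : i ∈ E
      · have heq : (∑ l ∈ Finset.Icc (i + 1) (n - 1), b l i) + b n i =
            i + ∑ k' ∈ Finset.Icc 1 (i - 1), b i k' := by
          have := (Finset.mem_filter.mp hiE).2
          rwa [stmt11_split n hn hi2] at this
        rw [if_pos hiE, if_pos hiE]
        omega
      · have hne : (∑ l ∈ Finset.Icc (i + 1) (n - 1), b l i) + b n i ≠
            i + ∑ k' ∈ Finset.Icc 1 (i - 1), b i k' := by
          intro h
          apply hiE
          rw [hE, Finset.mem_filter, Finset.mem_Icc]
          exact ⟨⟨hi1, hi2⟩, by rw [stmt11_split n hn hi2]; exact h⟩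
        rw [if_neg hiE, if_neg hiE]
        omega
  · -- left inverse
    rintro ⟨⟨J, b⟩, hp⟩
    obtain ⟨hJ, hcard, hsupp, hzero, hineq⟩ := hp
    have hfilt : (Finset.Icc 1 (n - 1)).filter (fun i =>
        (∑ l ∈ Finset.Icc (i + 1) n, stmt11F n J b l i) =
          i + ∑ k' ∈ Finset.Icc 1 (i - 1), stmt11F n J b i k') = J := by
      ext x
      simp only [Finset.mem_filter, Finset.mem_Icc]
      constructor
      · rintro ⟨⟨hx1, hx2⟩, hx3⟩
        exact ((keyF ⟨J, b⟩ ⟨hJ, hcard, hsupp, hzero, hineq⟩ x hx1 hx2).2).mp hx3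
      · intro hx
        have hm := Finset.mem_Icc.mp (hJ hx)
        exact ⟨hm, ((keyF ⟨J, b⟩ ⟨hJ, hcard, hsupp, hzero, hineq⟩ x hm.1 hm.2).2).mpr hx⟩
    apply Subtype.ext
    simp only [hfilt]
    refine Prod.ext rfl ?_
    funext i j
    by_cases h : i = n ∧ j ∈ J
    · obtain ⟨rfl, hj⟩ := h
      simp [stmt11G, hj, (hzero j hj).symm]
    · simp [stmt11G, stmt11F, h]
  · -- right inverse
    rintro ⟨b, hb⟩
    obtain ⟨hsupp, hineq, hcard⟩ := hb
    set E := (Finset.Icc 1 (n - 1)).filter (fun i =>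
        (∑ l ∈ Finset.Icc (i + 1) n, b l i) =
          i + ∑ k' ∈ Finset.Icc 1 (i - 1), b i k') with hE
    apply Subtype.ext
    funext i j
    show stmt11F n E (stmt11G n E b) i j = b i j
    by_cases h : i = n ∧ j ∈ E
    · obtain ⟨hi, hj⟩ := h
      rw [hi]
      have hjm := Finset.mem_Icc.mp (Finset.mem_of_mem_filter j hj)
      have hjn : j ≠ n := by omega
      have heq : (∑ l ∈ Finset.Icc (j + 1) (n - 1), b l j) + b n j =
          j + ∑ k' ∈ Finset.Icc 1 (j - 1), b j k' := by
        have := (Finset.mem_filter.mp hj).2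
        rwa [stmt11_split n hn hjm.2] at this
      simp only [stmt11F, hj, and_true, if_pos rfl, if_true]
      rw [stmt11G_row n E b hjn, stmt11G_col n hn]
      omega
    · simp only [stmt11F, h, if_false]
      by_cases h2 : i = n ∧ j ∈ E
      · exact absurd h2 h
      · simp [stmt11G, h]
end

section
/- Let G be the graph on vertex set [3] with c_1 parallel edges (1,2) and c_2 parallel edges (2,3), where c_1, c_2 ≥ 1. For each i ∈ {0, 1, ..., c_1}, the number of ways to choose a composition data realizing indegree sequence (i, c_1+c_2−i) in the reduction process equals binomial(c_1+c_2−1−i, c_2−1); equivalently, sum_{i=0}^{c_1} binomial(c_1+c_2−1−i, c_2−1) counts all leaves of the reduction tree of G. -/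
/-- The multiset of indegree sequences `(indeg(2), indeg(3))` of the leaves of a
reduction tree of the graph on `[3]` with `x` edges `(1,2)`, `y` edges `(2,3)` and
`z` edges `(1,3)`.  A reduction on a pair `(1,2),(2,3)` produces one child where the
edge `(2,3)` is replaced by `(1,3)` and one where `(1,2)` is replaced by `(1,3)`;
leaves are the graphs with no such pair, i.e. `x = 0` or `y = 0`. -/
def leafSeqs : ℕ → ℕ → ℕ → Multiset (ℕ × ℕ)
  | 0, y, z => {(0, y + z)}
  | x + 1, 0, z => {(x + 1, z)}
  | x + 1, y + 1, z => leafSeqs (x + 1) y (z + 1) + leafSeqs x (y + 1) (z + 1)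
  termination_by x y _ => x + y

lemma leafSeqs_fst_le : ∀ x y z, ∀ p ∈ leafSeqs x y z, p.1 ≤ x := by
  intro x y z
  induction x, y, z using leafSeqs.induct with
  | case1 y z => simp [leafSeqs]
  | case2 x z => simp [leafSeqs]
  | case3 x y z ih1 ih2 =>
    intro p hp
    rw [leafSeqs, Multiset.mem_add] at hp
    rcases hp with h | h
    · exact ih1 p h
    · exact le_trans (ih2 p h) (Nat.le_succ x)

lemma leafSeqs_count (x : ℕ) : ∀ y z i w, i ≤ x → i + w = x + (y + 1) + z →
    (leafSeqs x (y + 1) z).count (i, w) = (x + y - i).choose y := by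
  induction x with
  | zero =>
    intro y z i w hi hw
    interval_cases i
    have : w = y + 1 + z := by omega
    subst this
    simp [leafSeqs]
  | succ x ihx =>
    intro y
    induction y with
    | zero =>
      intro z i w hi hw
      rw [leafSeqs, leafSeqs, Multiset.count_add, Multiset.count_singleton]
      rcases Nat.lt_or_ge i (x + 1) with hlt | hge
      · have hne : ((i, w) : ℕ × ℕ) ≠ (x + 1, z + 1) := by
          intro h; exact absurd (congrArg Prod.fst h) (by simp; omega)
        rw [if_neg hne, ihx 0 (z + 1) i w (by omega) (by omega)]
        simp
      · have hie : i = x + 1 := le_antisymm hi hge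
        subst hie
        have hwz : w = z + 1 := by omega
        subst hwz
        rw [if_pos rfl]
        have h0 : (leafSeqs x (0 + 1) (z + 1)).count (x + 1, z + 1) = 0 := by
          rw [Multiset.count_eq_zero]
          intro hmem
          have := leafSeqs_fst_le x (0 + 1) (z + 1) _ hmem
          simp at this
        rw [h0]
        simp
    | succ y ihy =>
      intro z i w hi hw
      rw [leafSeqs, Multiset.count_add]
      rw [ihy (z + 1) i w hi (by omega)]
      rcases Nat.lt_or_ge i (x + 1) with hlt | hge
      · rw [ihx (y + 1) (z + 1) i w (by omega) (by omega)]
        have e1 : x + 1 + y - i = (x + y - i) + 1 := by omega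
        have e2 : x + (y + 1) - i = (x + y - i) + 1 := by omega
        have e3 : x + 1 + (y + 1) - i = (x + y - i) + 2 := by omega
        rw [e1, e2, e3]
        rw [Nat.choose_succ_succ ((x + y - i) + 1) y]
      · have hie : i = x + 1 := le_antisymm hi hge
        subst hie
        have h0 : (leafSeqs x (y + 1 + 1) (z + 1)).count (x + 1, w) = 0 := by
          rw [Multiset.count_eq_zero]
          intro hmem
          have := leafSeqs_fst_le x (y + 1 + 1) (z + 1) _ hmem
          simp at this
        rw [h0]
        have e1 : x + 1 + y - (x + 1) = y := by omega
        have e2 : x + 1 + (y + 1) - (x + 1) = y + 1 := by omega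
        rw [e1, e2]
        simp

lemma leafSeqs_card : ∀ x y z, Multiset.card (leafSeqs x y z) = (x + y).choose x := by
  intro x y z
  induction x, y, z using leafSeqs.induct with
  | case1 y z => simp [leafSeqs]
  | case2 x z => simp [leafSeqs]
  | case3 x y z ih1 ih2 =>
    rw [leafSeqs, Multiset.card_add, ih1, ih2]
    have e1 : x + 1 + y = (x + y) + 1 := by omega
    have e2 : x + (y + 1) = (x + y) + 1 := by omega
    have e3 : x + 1 + (y + 1) = (x + y) + 2 := by omega
    rw [e1, e2, e3, Nat.choose_succ_succ ((x + y) + 1) x]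
    simp only [Nat.succ_eq_add_one]
    omega

lemma sum_choose_aux (d : ℕ) : ∀ x, ∑ i ∈ Finset.range (x + 1), (d + i).choose d
    = (d + x + 1).choose (d + 1) := by
  intro x
  induction x with
  | zero => simp
  | succ x ih =>
    rw [Finset.sum_range_succ, ih]
    have : d + (x + 1) + 1 = (d + x + 1) + 1 := by omega
    rw [this, Nat.choose_succ_succ (d + x + 1) d]
    simp only [Nat.succ_eq_add_one]
    have e : d + (x + 1) = d + x + 1 := by omega
    rw [e]
    omega

lemma sum_choose (d x : ℕ) : ∑ i ∈ Finset.range (x + 1), (x + d - i).choose d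
    = (x + d + 1).choose (d + 1) := by
  have := Finset.sum_range_reflect (fun j => (d + j).choose d) (x + 1)
  have e0 : x + d + 1 = d + x + 1 := by omega
  rw [e0, ← sum_choose_aux d x]
  rw [← this]
  apply Finset.sum_congr rfl
  intro j hj
  simp only [Finset.mem_range] at hj
  congr 1
  omega

/-- For the graph on `[3]` with `c_1 ≥ 1` edges `(1,2)` and `c_2 ≥ 1`
edges `(2,3)`, the multiset of leaf indegree sequences of its reduction tree contains
`(i, c_1+c_2−i)` with multiplicity `C(c_1+c_2−1−i, c_2−1)` for each `0 ≤ i ≤ c_1`;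
equivalently `∑_{i=0}^{c_1} C(c_1+c_2−1−i, c_2−1)` counts all the leaves. -/
theorem stmt14 (c1 c2 : ℕ) (h1 : 1 ≤ c1) (h2 : 1 ≤ c2) :
    (∀ i ≤ c1, (leafSeqs c1 c2 0).count (i, c1 + c2 - i)
      = Nat.choose (c1 + c2 - 1 - i) (c2 - 1)) ∧
    Multiset.card (leafSeqs c1 c2 0)
      = ∑ i ∈ Finset.range (c1 + 1), Nat.choose (c1 + c2 - 1 - i) (c2 - 1) := by
  obtain ⟨d, rfl⟩ : ∃ d, c2 = d + 1 := ⟨c2 - 1, by omega⟩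
  constructor
  · intro i hi
    have := leafSeqs_count c1 d 0 i (c1 + (d + 1) - i) hi (by omega)
    rw [this]
    congr 1 <;> omega
  · rw [leafSeqs_card]
    have e : ∀ i ∈ Finset.range (c1 + 1),
        (c1 + (d + 1) - 1 - i).choose (d + 1 - 1) = (c1 + d - i).choose d := by
      intro i hi; congr 1 <;> omega
    rw [Finset.sum_congr rfl e, sum_choose d c1]
    have : c1 + d + 1 = c1 + (d + 1) := by omega
    rw [this]
    exact (Nat.choose_symm_add).symm ▸ rfl
end

section
/- The product formula identity: prod_{i=m+1}^{m+n-2} (1/(2i+1)) * binomial(m+n+i, 2i) = (prod_{p=1}^{n-2} C_p) * prod_{1 ≤ i < j ≤ n-1} (2(m+1)+i+j−1)/(i+j−1), where C_p is the p-th Catalan number. -/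
open Finset Nat

private lemma aux_fac1 (t : ℕ) : 2 * ∏ k ∈ range t, (k + 3) = (t + 2)! := by
  induction t with
  | zero => simp [Nat.factorial]
  | succ t ih =>
    rw [Finset.prod_range_succ, show t + 1 + 2 = (t + 2) + 1 from rfl, Nat.factorial_succ, ← ih]
    ring

private lemma aux_fac2 (a b : ℕ) : a ! * ∏ k ∈ range b, (a + 1 + k) = (a + b)! := by
  induction b with
  | zero => simp
  | succ b ih =>
    rw [Finset.prod_range_succ, show a + (b + 1) = (a + b) + 1 from rfl, Nat.factorial_succ, ← ih]
    ring

private lemma aux_catfac (n : ℕ) : catalan n * (n ! * (n + 1)!) = (2 * n)! := by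
  have h := succ_mul_catalan_eq_centralBinom n
  have h2 := Nat.choose_mul_factorial_mul_factorial (show n ≤ 2 * n by omega)
  calc catalan n * (n ! * (n + 1)!) = ((n + 1) * catalan n) * (n ! * n !) := by
        rw [Nat.factorial_succ]; ring
    _ = (2 * n).choose n * (n ! * n !) := by rw [h, Nat.centralBinom]
    _ = (2 * n)! := by
        rw [← h2, show 2 * n - n = n by omega]; ring

private lemma aux_chtwo (k : ℕ) : 2 * ((k + 2).choose 2) = (k + 2) * (k + 1) := by
  induction k with
  | zero => rfl
  | succ k ih =>
    rw [show k + 1 + 2 = (k + 2) + 1 from rfl, Nat.choose_succ_succ, Nat.choose_one_right]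
    ring_nf
    ring_nf at ih
    omega

private lemma aux_top (k : ℕ) : (((k + 2).choose k : ℚ)) / ((k : ℚ) + 1) = ((k : ℚ) + 2) / 2 := by
  have h1 : (k + 2).choose k = (k + 2).choose 2 := by
    rw [← Nat.choose_symm (show 2 ≤ k + 2 by omega)]
    congr 1
  have h2 := aux_chtwo k
  have hk : ((k : ℚ) + 1) ≠ 0 := by positivity
  rw [h1]
  have h2q : 2 * (((k + 2).choose 2 : ℚ)) = ((k : ℚ) + 2) * ((k : ℚ) + 1) := by
    exact_mod_cast h2
  field_simp
  linarith [h2q]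

private lemma aux_ratio (a i : ℕ) (h : 2 * i ≤ a) :
    (((a + 1).choose (2 * i) : ℚ)) = ((a.choose (2 * i) : ℚ)) * ((a : ℚ) + 1) / ((a : ℚ) + 1 - 2 * i) := by
  have hne : ((a : ℚ) + 1 - 2 * i) ≠ 0 := by
    have : (2 * i : ℚ) ≤ a := by exact_mod_cast h
    push_cast at this ⊢
    nlinarith
  have hc := Nat.choose_mul_succ_eq a (2 * i)
  have hcq : ((a.choose (2 * i) : ℚ)) * ((a : ℚ) + 1)
      = (((a + 1).choose (2 * i) : ℚ)) * ((a : ℚ) + 1 - 2 * i) := by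
    have hsub : ((a + 1 - 2 * i : ℕ) : ℚ) = (a : ℚ) + 1 - 2 * i := by
      rw [Nat.cast_sub (by omega)]; push_cast; ring
    have hq := congrArg (Nat.cast : ℕ → ℚ) hc
    push_cast [hsub] at hq
    linarith [hq]
  field_simp
  linarith [hcq]

private lemma aux_key (m t : ℕ) :
    ((m : ℚ) + t + 2) * ∏ k ∈ range t, ((2 * (m : ℚ) + t + 4 + k) / ((t : ℚ) + 2 - k))
      = (catalan (t + 1) : ℚ) *
        ∏ k ∈ range (t + 1), ((2 * (m : ℚ) + t + 4 + k) / ((k : ℚ) + t + 2)) := by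
  rw [Finset.prod_div_distrib, Finset.prod_div_distrib, Finset.prod_range_succ (fun k => (2 * (m : ℚ) + t + 4 + k))]
  have hDl : (∏ k ∈ range t, ((t : ℚ) + 2 - k)) = ∏ k ∈ range t, ((k : ℚ) + 3) := by
    rw [← Finset.prod_range_reflect (fun k => (k : ℚ) + 3) t]
    refine Finset.prod_congr rfl fun j hj => ?_
    have hjt : j < t := Finset.mem_range.mp hj
    rw [show t - 1 - j = t - (j + 1) by omega, Nat.cast_sub (by omega)]
    push_cast; ring
  have hF1 : ((t + 1)! : ℚ) ≠ 0 := by exact_mod_cast Nat.factorial_ne_zero _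
  have hF2 : ((t + 2)! : ℚ) ≠ 0 := by exact_mod_cast Nat.factorial_ne_zero _
  have hF3 : (((2 * t + 2)!) : ℚ) ≠ 0 := by exact_mod_cast Nat.factorial_ne_zero _
  have e1 : (∏ k ∈ range t, ((k : ℚ) + 3)) = ((t + 2)! : ℚ) / 2 := by
    have := aux_fac1 t
    have hq : 2 * (∏ k ∈ range t, ((k : ℚ) + 3)) = ((t + 2)! : ℚ) := by
      exact_mod_cast this
    linarith
  have e2 : (∏ k ∈ range (t + 1), ((k : ℚ) + t + 2)) = ((2 * t + 2)! : ℚ) / ((t + 1)! : ℚ) := by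
    have := aux_fac2 (t + 1) (t + 1)
    have hq : ((t + 1)! : ℚ) * (∏ k ∈ range (t + 1), ((t : ℚ) + 2 + k)) = ((2 * t + 2)! : ℚ) := by
      rw [show (2 * t + 2) = (t + 1) + (t + 1) by omega]
      exact_mod_cast this
    rw [eq_div_iff hF1]
    calc (∏ k ∈ range (t + 1), ((k : ℚ) + t + 2)) * ((t + 1)! : ℚ)
        = ((t + 1)! : ℚ) * (∏ k ∈ range (t + 1), ((t : ℚ) + 2 + k)) := by
          rw [mul_comm]; congr 1; exact Finset.prod_congr rfl fun k _ => by ring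
      _ = ((2 * t + 2)! : ℚ) := hq
  have e3 : (catalan (t + 1) : ℚ) = ((2 * t + 2)! : ℚ) / (((t + 1)! : ℚ) * ((t + 2)! : ℚ)) := by
    have := aux_catfac (t + 1)
    have hq : (catalan (t + 1) : ℚ) * (((t + 1)! : ℚ) * ((t + 2)! : ℚ)) = ((2 * t + 2)! : ℚ) := by
      rw [show (2 * t + 2) = 2 * (t + 1) by omega]
      exact_mod_cast this
    rw [eq_div_iff (by positivity)]
    exact hq
  rw [hDl, e1, e2, e3]
  field_simp
  ring

/-- For `m ≥ 0`, `n ≥ 2`,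
`∏_{i=m+1}^{m+n-2} (1/(2i+1)) C(m+n+i, 2i)
  = (∏_{p=1}^{n-2} C_p) * ∏_{1 ≤ i < j ≤ n-1} (2(m+1)+i+j−1)/(i+j−1)`. -/
theorem stmt17 (m n : ℕ) (hn : 2 ≤ n) :
    ∏ i ∈ Finset.Icc (m + 1) (m + n - 2),
        (Nat.choose (m + n + i) (2 * i) : ℚ) / (2 * i + 1)
      = (∏ p ∈ Finset.Icc 1 (n - 2), (catalan p : ℚ)) *
        ∏ j ∈ Finset.Icc 1 (n - 1), ∏ i ∈ Finset.Ico 1 j,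
          (2 * ((m : ℚ) + 1) + i + j - 1) / ((i : ℚ) + j - 1) := by
  obtain ⟨t, rfl⟩ : ∃ t, n = t + 2 := ⟨n - 2, by omega⟩
  clear hn
  induction t with
  | zero =>
    simp [show m + 2 - 2 = m from by omega]
  | succ t ih =>
    simp only [show m + (t + 2) - 2 = m + t from by omega, show t + 2 - 2 = t from rfl,
      show t + 2 - 1 = t + 1 from rfl] at ih
    simp only [show m + (t + 1 + 2) - 2 = m + t + 1 from by omega,
      show t + 1 + 2 - 2 = t + 1 from rfl, show t + 1 + 2 - 1 = t + 2 from rfl]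
    rw [Finset.prod_Icc_succ_top (show m + 1 ≤ m + t + 1 by omega),
        Finset.prod_Icc_succ_top (show 1 ≤ t + 1 by omega),
        Finset.prod_Icc_succ_top (show 1 ≤ t + 2 by omega)]
    have htop : (((m + (t + 1 + 2) + (m + t + 1)).choose (2 * (m + t + 1)) : ℚ))
        / (2 * ((m + t + 1 : ℕ) : ℚ) + 1) = ((m : ℚ) + t + 2) := by
      rw [show m + (t + 1 + 2) + (m + t + 1) = 2 * (m + t + 1) + 2 by omega]
      have h := aux_top (2 * (m + t + 1))
      have hd : ((2 : ℚ) * m + 2 * t + 3) ≠ 0 := by positivity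
      push_cast at h ⊢
      field_simp at h ⊢
      linarith
    have hmid : ∏ i ∈ Finset.Icc (m + 1) (m + t),
          (((m + (t + 1 + 2) + i).choose (2 * i) : ℚ)) / (2 * (i : ℚ) + 1)
        = (∏ i ∈ Finset.Icc (m + 1) (m + t),
            (((m + (t + 2) + i).choose (2 * i) : ℚ)) / (2 * (i : ℚ) + 1))
          * ∏ i ∈ Finset.Icc (m + 1) (m + t),
            (((m : ℚ) + t + 3 + i) / ((m : ℚ) + t + 3 - i)) := by
      rw [← Finset.prod_mul_distrib]
      refine Finset.prod_congr rfl fun i hi => ?_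
      obtain ⟨hi1, hi2⟩ := Finset.mem_Icc.mp hi
      have hc := Nat.choose_mul_succ_eq (m + (t + 2) + i) (2 * i)
      have hcq := congrArg (Nat.cast : ℕ → ℚ) hc
      push_cast [Nat.cast_sub (show 2 * i ≤ m + (t + 2) + i + 1 by omega)] at hcq
      rw [show m + (t + 1 + 2) + i = m + (t + 2) + i + 1 by omega]
      have hiq : (i : ℚ) ≤ (m : ℚ) + t := by
        have := (Nat.cast_le (α := ℚ)).mpr hi2; push_cast at this; linarith
      have hne1 : ((m : ℚ) + t + 3 - i) ≠ 0 := by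
        have h0 : (0 : ℚ) < (m : ℚ) + t + 3 - i := by linarith
        exact ne_of_gt h0
      have hne2 : (2 * (i : ℚ) + 1) ≠ 0 := by positivity
      set A := ((m + (t + 2) + i).choose (2 * i) : ℚ) with hA
      set B := ((m + (t + 2) + i + 1).choose (2 * i) : ℚ) with hB
      field_simp
      linear_combination (-1 : ℚ) * hcq
    rw [hmid, ih, htop]
    have hkey : ((m : ℚ) + t + 2) *
          (∏ i ∈ Finset.Icc (m + 1) (m + t), (((m : ℚ) + t + 3 + i) / ((m : ℚ) + t + 3 - i)))
        = ((catalan (t + 1) : ℚ)) *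
          ∏ i ∈ Finset.Ico 1 (t + 2),
            (2 * ((m : ℚ) + 1) + i + ((t + 2 : ℕ) : ℚ) - 1) / ((i : ℚ) + ((t + 2 : ℕ) : ℚ) - 1) := by
      have hX : (∏ i ∈ Finset.Icc (m + 1) (m + t),
            (((m : ℚ) + t + 3 + i) / ((m : ℚ) + t + 3 - i)))
          = ∏ k ∈ range t, ((2 * (m : ℚ) + t + 4 + k) / ((t : ℚ) + 2 - k)) := by
        rw [← Finset.Ico_add_one_right_eq_Icc, Finset.prod_Ico_eq_prod_range]
        simp only [show m + t + 1 - (m + 1) = t from by omega]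
        refine Finset.prod_congr rfl fun k _ => ?_
        push_cast
        ring
      have hI : (∏ i ∈ Finset.Ico 1 (t + 2),
            (2 * ((m : ℚ) + 1) + i + ((t + 2 : ℕ) : ℚ) - 1) / ((i : ℚ) + ((t + 2 : ℕ) : ℚ) - 1))
          = ∏ k ∈ range (t + 1), ((2 * (m : ℚ) + t + 4 + k) / ((k : ℚ) + t + 2)) := by
        rw [Finset.prod_Ico_eq_prod_range]
        simp only [show t + 2 - 1 = t + 1 from rfl]
        refine Finset.prod_congr rfl fun k _ => ?_
        push_cast
        ring
      rw [hX, hI]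
      exact aux_key m t
    linear_combination ((∏ x ∈ Finset.Icc 1 t, (catalan x : ℚ)) *
      ∏ x ∈ Finset.Icc 1 (t + 1), ∏ i ∈ Finset.Ico 1 x,
        (2 * ((m : ℚ) + 1) + i + x - 1) / ((i : ℚ) + x - 1)) * hkey
end
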